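/- arXiv:1805.06815 — 7 statements merged into one kernel-verified Lean document; each statement's English description precedes it below -/
import Mathlib

section
/- Fix N ≥ 1 and molar masses M_1,…,M_{N+1} > 0. For ρ' = (ρ_1,…,ρ_N) in the open simplex S = {ρ' ∈ (0,1)^N : Σ_{i=1}^N ρ_i < 1}, the entropy density h is differentiable on S and its partial derivatives are given by ∂h(ρ')/∂ρ_i = (ln x_i)/M_i − (ln x_{N+1})/M_{N+1} for i = 1,…,N; that is, the entropy variables w_i are the partial derivatives of h. -/
open scoped BigOperators

/-- The entropy variables `w_i = (ln x_i)/M_i − (ln x_{N+1})/M_{N+1}` are the partial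
derivatives of the entropy density `h` on the open simplex. -/
theorem stmt3 (N : ℕ) (hN : 1 ≤ N) (M : Fin (N + 1) → ℝ) (hM : ∀ i, 0 < M i) :
    let S : Set (EuclideanSpace ℝ (Fin N)) :=
      {ρ | (∀ i, 0 < ρ i ∧ ρ i < 1) ∧ ∑ i, ρ i < 1}
    let c : EuclideanSpace ℝ (Fin N) → ℝ := fun ρ =>
      (∑ i, ρ i / M i.castSucc) + (1 - ∑ i, ρ i) / M (Fin.last N)
    let x : EuclideanSpace ℝ (Fin N) → Fin N → ℝ := fun ρ i => ρ i / (c ρ * M i.castSucc)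
    let xlast : EuclideanSpace ℝ (Fin N) → ℝ := fun ρ =>
      (1 - ∑ i, ρ i) / (c ρ * M (Fin.last N))
    let h : EuclideanSpace ℝ (Fin N) → ℝ := fun ρ =>
      (∑ i, (ρ i / M i.castSucc) * Real.log (x ρ i))
        + ((1 - ∑ i, ρ i) / M (Fin.last N)) * Real.log (xlast ρ)
    let w : EuclideanSpace ℝ (Fin N) → Fin N → ℝ := fun ρ i =>
      Real.log (x ρ i) / M i.castSucc - Real.log (xlast ρ) / M (Fin.last N)
    ∀ ρ ∈ S, DifferentiableAt ℝ h ρ ∧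
      ∀ i, fderiv ℝ h ρ (EuclideanSpace.single i 1) = w ρ i := by
  intro S c x xlast h w ρ hρ
  classical
  have hρ' : (∀ i, 0 < ρ i ∧ ρ i < 1) ∧ ∑ i, ρ i < 1 := hρ
  have hMlpos : 0 < M (Fin.last N) := hM _
  -- the nicer function H
  set ψ : ℝ → ℝ := fun t => t * Real.log t with hψdef
  set H : EuclideanSpace ℝ (Fin N) → ℝ := fun ρ' =>
    (∑ j, ψ (ρ' j / M j.castSucc)) + ψ ((1 - ∑ j, ρ' j) / M (Fin.last N)) - ψ (c ρ')
    with hHdef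
  -- positivity facts on S
  have hcpos : ∀ ρ' ∈ S, 0 < c ρ' := by
    intro ρ' hmemS
    have hps : (∀ i, 0 < ρ' i ∧ ρ' i < 1) ∧ ∑ i, ρ' i < 1 := hmemS
    have h1 : (0:ℝ) ≤ ∑ j, ρ' j / M j.castSucc :=
      Finset.sum_nonneg fun j _ => le_of_lt (div_pos (hps.1 j).1 (hM _))
    have h2 : 0 < (1 - ∑ j, ρ' j) / M (Fin.last N) :=
      div_pos (by linarith [hps.2]) hMlpos
    have hcv : c ρ' = (∑ j, ρ' j / M j.castSucc) + (1 - ∑ j, ρ' j) / M (Fin.last N) := rfl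
    rw [hcv]
    linarith
  -- h = H on S
  have hkey : ∀ ρ' ∈ S, h ρ' = H ρ' := by
    intro ρ' hmemS
    have hps : (∀ i, 0 < ρ' i ∧ ρ' i < 1) ∧ ∑ i, ρ' i < 1 := hmemS
    have hc' : 0 < c ρ' := hcpos ρ' hmemS
    have hx : ∀ j : Fin N,
        Real.log (x ρ' j) = Real.log (ρ' j / M j.castSucc) - Real.log (c ρ') := by
      intro j
      have hxv : x ρ' j = (ρ' j / M j.castSucc) / c ρ' := by
        show ρ' j / (c ρ' * M j.castSucc) = _
        rw [mul_comm, ← div_div]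
      rw [hxv, Real.log_div (ne_of_gt (div_pos (hps.1 j).1 (hM _))) (ne_of_gt hc')]
    have hxl : Real.log (xlast ρ') =
        Real.log ((1 - ∑ j, ρ' j) / M (Fin.last N)) - Real.log (c ρ') := by
      have hxv : xlast ρ' = ((1 - ∑ j, ρ' j) / M (Fin.last N)) / c ρ' := by
        show (1 - ∑ j, ρ' j) / (c ρ' * M (Fin.last N)) = _
        rw [mul_comm, ← div_div]
      have hr : (0:ℝ) < 1 - ∑ j, ρ' j := by linarith [hps.2]
      rw [hxv, Real.log_div (ne_of_gt (div_pos hr hMlpos)) (ne_of_gt hc')]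
    show (∑ j, (ρ' j / M j.castSucc) * Real.log (x ρ' j))
        + ((1 - ∑ j, ρ' j) / M (Fin.last N)) * Real.log (xlast ρ') = _
    simp only [hHdef, hψdef, hx, hxl]
    have hcval : c ρ' = (∑ j, ρ' j / M j.castSucc) + (1 - ∑ j, ρ' j) / M (Fin.last N) := rfl
    rw [hcval]
    simp only [mul_sub, Finset.sum_sub_distrib, ← Finset.sum_mul]
    ring
  -- S is open
  have hScont : ∀ j : Fin N, Continuous fun ρ' : EuclideanSpace ℝ (Fin N) => ρ' j := fun j =>
    (EuclideanSpace.proj (𝕜 := ℝ) j).continuous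
  have hSopen : IsOpen S := by
    have hSeq : S = (⋂ j : Fin N,
        ({ρ' : EuclideanSpace ℝ (Fin N) | 0 < ρ' j} ∩ {ρ' : EuclideanSpace ℝ (Fin N) | ρ' j < 1}))
        ∩ {ρ' : EuclideanSpace ℝ (Fin N) | ∑ j, ρ' j < 1} := by
      ext ρ''
      simp only [Set.mem_inter_iff, Set.mem_iInter, Set.mem_setOf_eq]
      constructor
      · rintro ⟨hp, hs⟩; exact ⟨fun j => ⟨(hp j).1, (hp j).2⟩, hs⟩
      · rintro ⟨hp, hs⟩; exact ⟨fun j => ⟨(hp j).1, (hp j).2⟩, hs⟩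
    rw [hSeq]
    refine IsOpen.inter (isOpen_iInter_of_finite fun j => IsOpen.inter ?_ ?_)
      (isOpen_lt (continuous_finset_sum _ fun j _ => hScont j) continuous_const)
    · exact isOpen_lt continuous_const (hScont j)
    · exact isOpen_lt (hScont j) continuous_const
  have hmem : S ∈ nhds ρ := hSopen.mem_nhds hρ
  have hEv : h =ᶠ[nhds ρ] H := Filter.eventuallyEq_of_mem hmem fun ρ'' hρ'' => hkey ρ'' hρ''
  -- derivative of ψ
  have hψ : ∀ a : ℝ, a ≠ 0 → HasDerivAt ψ (Real.log a + 1) a := by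
    intro a ha
    rw [hψdef]
    have h1 := (hasDerivAt_id' a).mul (Real.hasDerivAt_log ha)
    rw [one_mul, mul_inv_cancel₀ ha] at h1
    exact h1
  -- linear pieces
  set P : Fin N → (EuclideanSpace ℝ (Fin N) →L[ℝ] ℝ) :=
    fun j => EuclideanSpace.proj (𝕜 := ℝ) j with hPdef
  set Lsum : EuclideanSpace ℝ (Fin N) →L[ℝ] ℝ := ∑ j, P j with hLdef
  have hLapp : ∀ ρ'' : EuclideanSpace ℝ (Fin N), Lsum ρ'' = ∑ j, ρ'' j := by
    intro ρ''
    rw [hLdef]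
    rw [ContinuousLinearMap.sum_apply]
    rfl
  have hLsum : HasFDerivAt (fun ρ'' : EuclideanSpace ℝ (Fin N) => ∑ j, ρ'' j) Lsum ρ := by
    have h0 := Lsum.hasFDerivAt (x := ρ)
    have hfun : ⇑Lsum = fun ρ'' : EuclideanSpace ℝ (Fin N) => ∑ j, ρ'' j := funext hLapp
    rwa [hfun] at h0
  have hu : ∀ j : Fin N, HasFDerivAt (fun ρ'' : EuclideanSpace ℝ (Fin N) => ρ'' j / M j.castSucc)
      ((M j.castSucc)⁻¹ • P j) ρ := by
    intro j
    have h0 := ((P j).hasFDerivAt (x := ρ)).mul_const (M j.castSucc)⁻¹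
    simp only [div_eq_mul_inv]
    exact h0
  have hrd : HasFDerivAt (fun ρ'' : EuclideanSpace ℝ (Fin N) => (1 - ∑ j, ρ'' j) / M (Fin.last N))
      ((M (Fin.last N))⁻¹ • (-Lsum)) ρ := by
    have h1 : HasFDerivAt (fun ρ'' : EuclideanSpace ℝ (Fin N) => 1 - ∑ j, ρ'' j) (-Lsum) ρ :=
      hLsum.const_sub 1
    have h0 := h1.mul_const (M (Fin.last N))⁻¹
    simpa [div_eq_mul_inv] using h0
  set Dc : EuclideanSpace ℝ (Fin N) →L[ℝ] ℝ :=
    (∑ j, (M j.castSucc)⁻¹ • P j) + (M (Fin.last N))⁻¹ • (-Lsum) with hDcdef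
  have hcd : HasFDerivAt c Dc ρ := by
    have h1 : HasFDerivAt (fun ρ'' : EuclideanSpace ℝ (Fin N) => ∑ j, ρ'' j / M j.castSucc)
        (∑ j, (M j.castSucc)⁻¹ • P j) ρ := HasFDerivAt.fun_sum fun j _ => hu j
    exact h1.add hrd
  -- derivative of H
  have hρpos : ∀ j, 0 < ρ j := fun j => (hρ'.1 j).1
  have hrpos : (0:ℝ) < 1 - ∑ j, ρ j := by linarith [hρ'.2]
  have hcρ : 0 < c ρ := hcpos ρ hρ
  set D : EuclideanSpace ℝ (Fin N) →L[ℝ] ℝ :=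
    (∑ j, (Real.log (ρ j / M j.castSucc) + 1) • ((M j.castSucc)⁻¹ • P j))
      + (Real.log ((1 - ∑ j, ρ j) / M (Fin.last N)) + 1) • ((M (Fin.last N))⁻¹ • (-Lsum))
      - (Real.log (c ρ) + 1) • Dc with hDdef
  have hH : HasFDerivAt H D ρ := by
    have hterm : ∀ j : Fin N,
        HasFDerivAt (fun ρ'' : EuclideanSpace ℝ (Fin N) => ψ (ρ'' j / M j.castSucc))
        ((Real.log (ρ j / M j.castSucc) + 1) • ((M j.castSucc)⁻¹ • P j)) ρ := by
      intro j
      exact (hψ _ (ne_of_gt (div_pos (hρpos j) (hM _)))).comp_hasFDerivAt ρ (hu j)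
    have h1 : HasFDerivAt (fun ρ'' : EuclideanSpace ℝ (Fin N) => ∑ j, ψ (ρ'' j / M j.castSucc))
        (∑ j, (Real.log (ρ j / M j.castSucc) + 1) • ((M j.castSucc)⁻¹ • P j)) ρ :=
      HasFDerivAt.fun_sum fun j _ => hterm j
    have h2 : HasFDerivAt
        (fun ρ'' : EuclideanSpace ℝ (Fin N) => ψ ((1 - ∑ j, ρ'' j) / M (Fin.last N)))
        ((Real.log ((1 - ∑ j, ρ j) / M (Fin.last N)) + 1) • ((M (Fin.last N))⁻¹ • (-Lsum))) ρ :=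
      by exact (hψ _ (ne_of_gt (div_pos hrpos hMlpos))).comp_hasFDerivAt ρ hrd
    have h3 : HasFDerivAt (fun ρ'' : EuclideanSpace ℝ (Fin N) => ψ (c ρ''))
        ((Real.log (c ρ) + 1) • Dc) ρ :=
      (hψ _ (ne_of_gt hcρ)).comp_hasFDerivAt ρ hcd
    exact (h1.add h2).sub h3
  have hdiff : DifferentiableAt ℝ h ρ :=
    (Filter.EventuallyEq.differentiableAt_iff hEv).2 hH.differentiableAt
  refine ⟨hdiff, fun i => ?_⟩
  have hfd : fderiv ℝ h ρ = D := by
    rw [hEv.fderiv_eq, hH.fderiv]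
  rw [hfd]
  -- evaluate D at the basis vector
  have hPapp : ∀ j : Fin N, P j (EuclideanSpace.single i (1:ℝ)) = if j = i then 1 else 0 := by
    intro j
    show (EuclideanSpace.single i (1:ℝ)) j = _
    rw [EuclideanSpace.single_apply]
  have hLsing : Lsum (EuclideanSpace.single i (1:ℝ)) = 1 := by
    rw [hLapp]
    simp [EuclideanSpace.single_apply]
  have hDval : D (EuclideanSpace.single i (1:ℝ)) =
      (Real.log (ρ i / M i.castSucc) + 1) * (M i.castSucc)⁻¹
        + (Real.log ((1 - ∑ j, ρ j) / M (Fin.last N)) + 1) * ((M (Fin.last N))⁻¹ * (-1))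
        - (Real.log (c ρ) + 1) * ((M i.castSucc)⁻¹ + (M (Fin.last N))⁻¹ * (-1)) := by
    simp only [hDdef, hDcdef, ContinuousLinearMap.sub_apply, ContinuousLinearMap.add_apply,
      ContinuousLinearMap.smul_apply, ContinuousLinearMap.sum_apply,
      ContinuousLinearMap.neg_apply, smul_eq_mul, hPapp, hLsing, mul_ite, mul_one, mul_zero,
      Finset.sum_ite_eq', Finset.mem_univ, if_true]
  rw [hDval]
  -- rewrite the target
  have hxi : Real.log (x ρ i) = Real.log (ρ i / M i.castSucc) - Real.log (c ρ) := by
    have hxv : x ρ i = (ρ i / M i.castSucc) / c ρ := by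
      show ρ i / (c ρ * M i.castSucc) = _
      rw [mul_comm, ← div_div]
    rw [hxv, Real.log_div (ne_of_gt (div_pos (hρpos i) (hM _))) (ne_of_gt hcρ)]
  have hxli : Real.log (xlast ρ) =
      Real.log ((1 - ∑ j, ρ j) / M (Fin.last N)) - Real.log (c ρ) := by
    have hxv : xlast ρ = ((1 - ∑ j, ρ j) / M (Fin.last N)) / c ρ := by
      show (1 - ∑ j, ρ j) / (c ρ * M (Fin.last N)) = _
      rw [mul_comm, ← div_div]
    rw [hxv, Real.log_div (ne_of_gt (div_pos hrpos hMlpos)) (ne_of_gt hcρ)]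
  show _ = Real.log (x ρ i) / M i.castSucc - Real.log (xlast ρ) / M (Fin.last N)
  rw [hxi, hxli]
  have hMi : (0:ℝ) < M i.castSucc := hM _
  field_simp
  ring
end

section
/- Fix N ≥ 1 and molar masses M_1,…,M_{N+1} > 0. For ρ' in the open simplex S, the entropy density h is twice differentiable and its Hessian satisfies, for i, j = 1,…,N: ∂²h(ρ')/∂ρ_i∂ρ_j = ∂w_i/∂ρ_j = δ_{ij}/(M_i ρ_i) + 1/(M_{N+1} ρ_{N+1}) − (1/c)·(1/M_i − 1/M_{N+1})·(1/M_j − 1/M_{N+1}), where δ_{ij} is the Kronecker delta. -/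
open scoped BigOperators

namespace Stmt4Aux

variable {N : ℕ}

noncomputable abbrev pr (k : Fin N) : EuclideanSpace ℝ (Fin N) →L[ℝ] ℝ :=
  EuclideanSpace.proj k

/-- the open simplex -/
def S' (N : ℕ) : Set (EuclideanSpace ℝ (Fin N)) :=
  {ρ | (∀ i, 0 < ρ i ∧ ρ i < 1) ∧ ∑ i, ρ i < 1}

lemma isOpen_S' : IsOpen (S' N) := by
  have h1 : S' N = (⋂ i, {ρ : EuclideanSpace ℝ (Fin N) | 0 < ρ i ∧ ρ i < 1}) ∩
      {ρ : EuclideanSpace ℝ (Fin N) | ∑ i, ρ i < 1} := by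
    ext ρ; simp [S', Set.mem_iInter]
  rw [h1]
  refine IsOpen.inter (isOpen_iInter_of_finite fun i => ?_) ?_
  · exact IsOpen.inter (isOpen_lt continuous_const (pr i).continuous)
      (isOpen_lt (pr i).continuous continuous_const)
  · exact isOpen_lt (continuous_finset_sum _ fun i _ => (pr i).continuous) continuous_const

variable (M : Fin (N + 1) → ℝ)

noncomputable def cf (σ : EuclideanSpace ℝ (Fin N)) : ℝ :=
  (∑ i, σ i / M i.castSucc) + (1 - ∑ i, σ i) / M (Fin.last N)

noncomputable def g (i : Fin N) (σ : EuclideanSpace ℝ (Fin N)) : ℝ :=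
  (1 + Real.log (σ i / M i.castSucc)) / M i.castSucc
    - (1 + Real.log ((1 - ∑ k, σ k) / M (Fin.last N))) / M (Fin.last N)
    - (1 + Real.log (cf M σ)) * (1 / M i.castSucc - 1 / M (Fin.last N))

noncomputable def H (σ : EuclideanSpace ℝ (Fin N)) : ℝ :=
  (∑ k, (σ k / M k.castSucc) * Real.log (σ k / M k.castSucc))
    + ((1 - ∑ k, σ k) / M (Fin.last N)) * Real.log ((1 - ∑ k, σ k) / M (Fin.last N))
    - cf M σ * Real.log (cf M σ)

section positivity

variable {σ : EuclideanSpace ℝ (Fin N)}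

lemma pos_coord (hσ : σ ∈ S' N) (k : Fin N) : 0 < σ k := (hσ.1 k).1

lemma pos_last (hσ : σ ∈ S' N) : 0 < 1 - ∑ k, σ k := sub_pos.2 hσ.2

lemma pos_cf (hM : ∀ i, 0 < M i) (hσ : σ ∈ S' N) : 0 < cf M σ := by
  refine add_pos_of_nonneg_of_pos (Finset.sum_nonneg fun k _ => ?_)
    (div_pos (pos_last hσ) (hM _))
  exact le_of_lt (div_pos (pos_coord hσ k) (hM _))

end positivity

/-- first-coordinate affine pieces -/
lemma ha (k : Fin N) (σ : EuclideanSpace ℝ (Fin N)) :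
    HasFDerivAt (fun σ : EuclideanSpace ℝ (Fin N) => σ k / M k.castSucc)
      ((M k.castSucc)⁻¹ • (pr k : EuclideanSpace ℝ (Fin N) →L[ℝ] ℝ)) σ := by
  simpa [div_eq_inv_mul, smul_smul] using
    ((EuclideanSpace.proj (𝕜 := ℝ) (ι := Fin N) k).hasFDerivAt (x := σ)).const_mul
      (M k.castSucc)⁻¹

lemma hsum (σ : EuclideanSpace ℝ (Fin N)) :
    HasFDerivAt (fun σ : EuclideanSpace ℝ (Fin N) => ∑ k, σ k)
      (∑ k, (pr k : EuclideanSpace ℝ (Fin N) →L[ℝ] ℝ)) σ :=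
  HasFDerivAt.fun_sum fun k _ => (EuclideanSpace.proj (𝕜 := ℝ) (ι := Fin N) k).hasFDerivAt

lemma hb (σ : EuclideanSpace ℝ (Fin N)) :
    HasFDerivAt (fun σ : EuclideanSpace ℝ (Fin N) => (1 - ∑ k, σ k) / M (Fin.last N))
      ((M (Fin.last N))⁻¹ • (-(∑ k, (pr k : EuclideanSpace ℝ (Fin N) →L[ℝ] ℝ)))) σ := by
  simpa [div_eq_inv_mul, smul_smul] using
    (((hsum σ).const_sub 1).const_mul (M (Fin.last N))⁻¹)

lemma hc (σ : EuclideanSpace ℝ (Fin N)) :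
    HasFDerivAt (cf M)
      ((∑ k, (M k.castSucc)⁻¹ • (pr k : EuclideanSpace ℝ (Fin N) →L[ℝ] ℝ))
        + (M (Fin.last N))⁻¹ • (-(∑ k, (pr k : EuclideanSpace ℝ (Fin N) →L[ℝ] ℝ)))) σ :=
  (HasFDerivAt.fun_sum fun k _ => ha M k σ).fun_add (hb M σ)

section keyA

variable {σ : EuclideanSpace ℝ (Fin N)}

lemma keyA (hM : ∀ i, 0 < M i) (hσ : σ ∈ S' N) : ∃ L : EuclideanSpace ℝ (Fin N) →L[ℝ] ℝ,
    HasFDerivAt (H M) L σ ∧ ∀ i, L (EuclideanSpace.single i 1) = g M i σ := by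
  have hk : ∀ k : Fin N, σ k / M k.castSucc ≠ 0 :=
    fun k => ne_of_gt (div_pos (pos_coord hσ k) (hM _))
  have hl : (1 - ∑ k, σ k) / M (Fin.last N) ≠ 0 :=
    ne_of_gt (div_pos (pos_last hσ) (hM _))
  have hcne : cf M σ ≠ 0 := ne_of_gt (pos_cf M hM hσ)
  have hA := HasFDerivAt.fun_sum (u := Finset.univ)
    (fun k (_ : k ∈ Finset.univ) => (ha M k σ).fun_mul ((ha M k σ).log (hk k)))
  have hB := (hb M σ).fun_mul ((hb M σ).log hl)
  have hC := (hc M σ).fun_mul ((hc M σ).log hcne)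
  refine ⟨_, (hA.fun_add hB).fun_sub hC, ?_⟩
  intro i
  have hMi : M i.castSucc ≠ 0 := (hM _).ne'
  have hMl : M (Fin.last N) ≠ 0 := (hM _).ne'
  have hσi : σ i ≠ 0 := (pos_coord hσ i).ne'
  have hls : (1 : ℝ) - ∑ k, σ k ≠ 0 := (pos_last hσ).ne'
  simp only [ContinuousLinearMap.add_apply, ContinuousLinearMap.sub_apply,
    ContinuousLinearMap.sum_apply, ContinuousLinearMap.smul_apply,
    ContinuousLinearMap.neg_apply, PiLp.proj_apply, EuclideanSpace.single_apply,
    smul_eq_mul, mul_ite, mul_one, mul_zero, Finset.sum_add_distrib,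
    Finset.sum_ite_eq', Finset.mem_univ, if_true, g]
  field_simp
  ring

lemma keyB (hM : ∀ i, 0 < M i) (hσ : σ ∈ S' N) (i : Fin N) : ∃ L : EuclideanSpace ℝ (Fin N) →L[ℝ] ℝ,
    HasFDerivAt (g M i) L σ ∧ ∀ j, L (EuclideanSpace.single j 1)
      = (if i = j then 1 / (M i.castSucc * σ i) else 0)
        + 1 / (M (Fin.last N) * (1 - ∑ k, σ k))
        - (1 / cf M σ) * (1 / M i.castSucc - 1 / M (Fin.last N))
          * (1 / M j.castSucc - 1 / M (Fin.last N)) := by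
  have hk : σ i / M i.castSucc ≠ 0 :=
    ne_of_gt (div_pos (pos_coord hσ i) (hM _))
  have hl : (1 - ∑ k, σ k) / M (Fin.last N) ≠ 0 :=
    ne_of_gt (div_pos (pos_last hσ) (hM _))
  have hcne : cf M σ ≠ 0 := ne_of_gt (pos_cf M hM hσ)
  have t1 := (((ha M i σ).log hk).const_add 1).mul_const (M i.castSucc)⁻¹
  have t2 := (((hb M σ).log hl).const_add 1).mul_const (M (Fin.last N))⁻¹
  have t3 := (((hc M σ).log hcne).const_add 1).mul_const
    (1 / M i.castSucc - 1 / M (Fin.last N))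
  have hG := (t1.sub t2).sub t3
  have hgeq : g M i = fun σ : EuclideanSpace ℝ (Fin N) =>
      (1 + Real.log (σ i / M i.castSucc)) * (M i.castSucc)⁻¹
        - (1 + Real.log ((1 - ∑ k, σ k) / M (Fin.last N))) * (M (Fin.last N))⁻¹
        - (1 + Real.log (cf M σ)) * (1 / M i.castSucc - 1 / M (Fin.last N)) := by
    funext τ; simp [g, div_eq_mul_inv]
  have hG' := hG.congr_of_eventuallyEq (Filter.EventuallyEq.of_eq hgeq)
  refine ⟨_, hG', ?_⟩
  intro j
  have hMi : M i.castSucc ≠ 0 := (hM _).ne'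
  have hMj : M j.castSucc ≠ 0 := (hM _).ne'
  have hMl : M (Fin.last N) ≠ 0 := (hM _).ne'
  have hσi : σ i ≠ 0 := (pos_coord hσ i).ne'
  have hls : (1 : ℝ) - ∑ k, σ k ≠ 0 := (pos_last hσ).ne'
  simp only [ContinuousLinearMap.add_apply, ContinuousLinearMap.sub_apply,
    ContinuousLinearMap.sum_apply, ContinuousLinearMap.smul_apply,
    ContinuousLinearMap.neg_apply, PiLp.proj_apply, EuclideanSpace.single_apply,
    smul_eq_mul, mul_ite, mul_one, mul_zero, Finset.sum_add_distrib,
    Finset.sum_ite_eq', Finset.mem_univ, if_true]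
  rcases eq_or_ne i j with rfl | hij
  · simp only [if_pos rfl]
    field_simp
    ring
  · simp only [if_neg hij]
    field_simp
    ring

lemma h_eq_H_on (hM : ∀ i, 0 < M i) (hσ : σ ∈ S' N) :
    ((∑ k, (σ k / M k.castSucc) * Real.log (σ k / (cf M σ * M k.castSucc)))
      + ((1 - ∑ k, σ k) / M (Fin.last N))
        * Real.log ((1 - ∑ k, σ k) / (cf M σ * M (Fin.last N)))) = H M σ := by
  have hcne : cf M σ ≠ 0 := ne_of_gt (pos_cf M hM hσ)
  have hrw : ∀ k : Fin N, Real.log (σ k / (cf M σ * M k.castSucc))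
      = Real.log (σ k / M k.castSucc) - Real.log (cf M σ) := by
    intro k
    rw [show σ k / (cf M σ * M k.castSucc) = (σ k / M k.castSucc) / cf M σ by
      rw [div_div, mul_comm]]
    exact Real.log_div (ne_of_gt (div_pos (pos_coord hσ k) (hM _))) hcne
  have hrwl : Real.log ((1 - ∑ k, σ k) / (cf M σ * M (Fin.last N)))
      = Real.log ((1 - ∑ k, σ k) / M (Fin.last N)) - Real.log (cf M σ) := by
    rw [show (1 - ∑ k, σ k) / (cf M σ * M (Fin.last N))
        = ((1 - ∑ k, σ k) / M (Fin.last N)) / cf M σ by rw [div_div, mul_comm]]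
    exact Real.log_div (ne_of_gt (div_pos (pos_last hσ) (hM _))) hcne
  simp only [hrw, hrwl, mul_sub]
  rw [Finset.sum_sub_distrib, ← Finset.sum_mul]
  simp only [H, cf]
  ring

end keyA

end Stmt4Aux

/-- The entropy density `h` is twice differentiable on the open simplex and its Hessian
is given by
`∂²h/∂ρ_i∂ρ_j = δ_{ij}/(M_i ρ_i) + 1/(M_{N+1} ρ_{N+1})
  − (1/c)(1/M_i − 1/M_{N+1})(1/M_j − 1/M_{N+1})`. -/
theorem stmt4 (N : ℕ) (hN : 1 ≤ N) (M : Fin (N + 1) → ℝ) (hM : ∀ i, 0 < M i) :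
    let S : Set (EuclideanSpace ℝ (Fin N)) :=
      {ρ | (∀ i, 0 < ρ i ∧ ρ i < 1) ∧ ∑ i, ρ i < 1}
    let c : EuclideanSpace ℝ (Fin N) → ℝ := fun ρ =>
      (∑ i, ρ i / M i.castSucc) + (1 - ∑ i, ρ i) / M (Fin.last N)
    let x : EuclideanSpace ℝ (Fin N) → Fin N → ℝ := fun ρ i => ρ i / (c ρ * M i.castSucc)
    let xlast : EuclideanSpace ℝ (Fin N) → ℝ := fun ρ =>
      (1 - ∑ i, ρ i) / (c ρ * M (Fin.last N))
    let h : EuclideanSpace ℝ (Fin N) → ℝ := fun ρ =>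
      (∑ i, (ρ i / M i.castSucc) * Real.log (x ρ i))
        + ((1 - ∑ i, ρ i) / M (Fin.last N)) * Real.log (xlast ρ)
    ∀ ρ ∈ S, DifferentiableAt ℝ h ρ ∧
      ∀ i : Fin N,
        DifferentiableAt ℝ (fun σ => fderiv ℝ h σ (EuclideanSpace.single i 1)) ρ ∧
        ∀ j : Fin N,
          fderiv ℝ (fun σ => fderiv ℝ h σ (EuclideanSpace.single i 1)) ρ
              (EuclideanSpace.single j 1)
            = (if i = j then 1 / (M i.castSucc * ρ i) else 0)
              + 1 / (M (Fin.last N) * (1 - ∑ k, ρ k))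
              - (1 / c ρ) * (1 / M i.castSucc - 1 / M (Fin.last N))
                * (1 / M j.castSucc - 1 / M (Fin.last N)) := by
  intro S c x xlast h ρ hρ
  classical
  have hρ' : ρ ∈ Stmt4Aux.S' N := hρ
  have hSmem : Stmt4Aux.S' N ∈ nhds ρ := Stmt4Aux.isOpen_S'.mem_nhds hρ'
  -- h agrees with H on S'
  have hpt : ∀ τ ∈ Stmt4Aux.S' N, h τ = Stmt4Aux.H M τ := by
    intro τ hτ
    have := Stmt4Aux.h_eq_H_on M hM hτ
    simpa [h, x, xlast, c, Stmt4Aux.cf] using this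
  have heqH : h =ᶠ[nhds ρ] Stmt4Aux.H M := Filter.eventuallyEq_of_mem hSmem hpt
  -- first derivative
  have hfd : ∀ τ ∈ Stmt4Aux.S' N, ∀ i : Fin N,
      fderiv ℝ h τ (EuclideanSpace.single i 1) = Stmt4Aux.g M i τ := by
    intro τ hτ i
    obtain ⟨L, hL, hval⟩ := Stmt4Aux.keyA M hM hτ
    have heqτ : h =ᶠ[nhds τ] Stmt4Aux.H M :=
      Filter.eventuallyEq_of_mem (Stmt4Aux.isOpen_S'.mem_nhds hτ) hpt
    rw [(hL.congr_of_eventuallyEq heqτ).fderiv]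
    exact hval i
  obtain ⟨L0, hL0, _⟩ := Stmt4Aux.keyA M hM hρ'
  refine ⟨(hL0.congr_of_eventuallyEq heqH).differentiableAt, ?_⟩
  intro i
  have heq2 : (fun σ => fderiv ℝ h σ (EuclideanSpace.single i 1)) =ᶠ[nhds ρ]
      Stmt4Aux.g M i :=
    Filter.eventuallyEq_of_mem hSmem fun τ hτ => hfd τ hτ i
  obtain ⟨L2, hL2, hval2⟩ := Stmt4Aux.keyB M hM hρ' i
  refine ⟨(hL2.congr_of_eventuallyEq heq2).differentiableAt, ?_⟩
  intro j
  rw [heq2.fderiv_eq, hL2.fderiv]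
  exact hval2 j
end

section
/- Fix N ≥ 1 and molar masses M_1,…,M_{N+1} > 0. For every ρ' = (ρ_1,…,ρ_N) with ρ_i > 0 for all i and Σ_{i=1}^N ρ_i < 1, the N×N matrix H(ρ') with entries H_{ij} = δ_{ij}/(M_i ρ_i) + 1/(M_{N+1} ρ_{N+1}) − (1/c)·(1/M_i − 1/M_{N+1})·(1/M_j − 1/M_{N+1}) is symmetric and positive definite. -/
open scoped BigOperators
open Matrix

set_option maxHeartbeats 1000000 in
/-- The Hessian matrix `H(ρ')` of the entropy density is symmetric and positive
definite on the open simplex. -/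
theorem stmt5 (N : ℕ) (hN : 1 ≤ N) (M : Fin (N + 1) → ℝ) (hM : ∀ i, 0 < M i)
    (ρ : Fin N → ℝ) (hρpos : ∀ i, 0 < ρ i) (hρsum : ∑ i, ρ i < 1) :
    let ρlast : ℝ := 1 - ∑ i, ρ i
    let c : ℝ := (∑ i, ρ i / M i.castSucc) + ρlast / M (Fin.last N)
    let H : Matrix (Fin N) (Fin N) ℝ := Matrix.of fun i j =>
      (if i = j then 1 / (M i.castSucc * ρ i) else 0)
        + 1 / (M (Fin.last N) * ρlast)
        - (1 / c) * (1 / M i.castSucc - 1 / M (Fin.last N))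
          * (1 / M j.castSucc - 1 / M (Fin.last N))
    H.IsSymm ∧ H.PosDef := by
  intro ρlast c H
  set Ml : ℝ := M (Fin.last N) with hMl
  have hMlpos : 0 < Ml := hM _
  have hρl : 0 < ρlast := by simp only [ρlast]; linarith
  have hcpos : 0 < c := by
    have h1 : 0 ≤ ∑ i, ρ i / M i.castSucc :=
      Finset.sum_nonneg fun i _ => le_of_lt (div_pos (hρpos i) (hM _))
    have h2 : 0 < ρlast / Ml := div_pos hρl hMlpos
    simp only [c]
    linarith
  have hc0 : c ≠ 0 := ne_of_gt hcpos
  have hswap : ∀ i j, H j i = H i j := by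
    intro i j
    simp only [H, Matrix.of_apply]
    by_cases h : i = j
    · subst h; ring
    · rw [if_neg h, if_neg (fun hh => h hh.symm)]; ring
  have hsymm : H.IsSymm := by
    apply Matrix.IsSymm.ext
    intro i j
    exact hswap i j
  refine ⟨hsymm, Matrix.PosDef.of_dotProduct_mulVec_pos ?_ ?_⟩
  · -- Hermitian
    ext i j
    simp only [Matrix.conjTranspose_apply, star_trivial]
    exact hswap i j
  · -- positivity of the quadratic form
    intro x hx
    have hstar : star x = x := by
      funext i; simp
    rw [hstar]
    set s : ℝ := ∑ i, x i with hs
    set A : ℝ := ∑ i, x i * (1 / M i.castSucc - 1 / Ml) with hA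
    set m : ℝ := A / c with hm
    -- compute the matrix-vector product
    have hmv : ∀ i, (H.mulVec x) i
        = x i / (M i.castSucc * ρ i) + s / (Ml * ρlast)
          - (1 / c) * (1 / M i.castSucc - 1 / Ml) * A := by
      intro i
      simp only [Matrix.mulVec, dotProduct, H, Matrix.of_apply, ← hMl]
      have : ∀ j, ((if i = j then 1 / (M i.castSucc * ρ i) else 0)
            + 1 / (Ml * ρlast)
            - (1 / c) * (1 / M i.castSucc - 1 / Ml) * (1 / M j.castSucc - 1 / Ml)) * x j
          = (if i = j then (1 / (M i.castSucc * ρ i)) * x j else 0)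
            + (1 / (Ml * ρlast)) * x j
            - ((1 / c) * (1 / M i.castSucc - 1 / Ml)) * (x j * (1 / M j.castSucc - 1 / Ml)) := by
        intro j
        by_cases h : i = j
        · rw [if_pos h, if_pos h]; ring
        · rw [if_neg h, if_neg h]; ring
      rw [Finset.sum_congr rfl fun j _ => this j]
      rw [Finset.sum_sub_distrib, Finset.sum_add_distrib, Finset.sum_ite_eq,
        ← Finset.mul_sum, ← Finset.mul_sum]
      simp only [Finset.mem_univ, if_true, ← hA, ← hs]
      field_simp
    have hQ : x ⬝ᵥ (H.mulVec x)
        = (∑ i, x i ^ 2 / (M i.castSucc * ρ i)) + s ^ 2 / (Ml * ρlast) - (1 / c) * A ^ 2 := by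
      simp only [dotProduct]
      rw [Finset.sum_congr rfl fun i _ => by rw [hmv i]]
      have : ∀ i : Fin N, x i * (x i / (M i.castSucc * ρ i) + s / (Ml * ρlast)
            - (1 / c) * (1 / M i.castSucc - 1 / Ml) * A)
          = x i ^ 2 / (M i.castSucc * ρ i) + (s / (Ml * ρlast)) * x i
            - ((1 / c) * A) * (x i * (1 / M i.castSucc - 1 / Ml)) := by
        intro i; ring
      rw [Finset.sum_congr rfl fun i _ => this i]
      rw [Finset.sum_sub_distrib, Finset.sum_add_distrib, ← Finset.mul_sum, ← Finset.mul_sum,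
        ← hA, ← hs]
      ring
    have hone : (∑ i, ρ i) + ρlast = 1 := by simp only [ρlast]; ring
    have hceq : c = (∑ i, ρ i / M i.castSucc) + ρlast / Ml := rfl
    clear_value m A s H c Ml ρlast
    have hMl0 : Ml ≠ 0 := hMlpos.ne'
    have hρl0 : ρlast ≠ 0 := hρl.ne'
    -- rewrite the quadratic form as a sum of squares
    set T : ℝ := (∑ i, (ρ i / M i.castSucc) * (x i / ρ i - m) ^ 2)
      + (ρlast / Ml) * (-s / ρlast - m) ^ 2 with hT
    have hAeq : A = (∑ i, x i / M i.castSucc) - s / Ml := by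
      rw [hA, hs]
      rw [Finset.sum_div, ← Finset.sum_sub_distrib]
      apply Finset.sum_congr rfl
      intro i _
      have := (hM i.castSucc).ne'
      field_simp
    have hTQ : T = x ⬝ᵥ (H.mulVec x) := by
      rw [hQ, hT]
      have hexp : ∀ i : Fin N, (ρ i / M i.castSucc) * (x i / ρ i - m) ^ 2
          = x i ^ 2 / (M i.castSucc * ρ i) - (2 * m) * (x i / M i.castSucc)
            + m ^ 2 * (ρ i / M i.castSucc) := by
        intro i
        have hρi := (hρpos i).ne'
        have hMi := (hM i.castSucc).ne'
        field_simp
        ring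
      rw [Finset.sum_congr rfl fun i _ => hexp i]
      rw [Finset.sum_add_distrib, Finset.sum_sub_distrib, ← Finset.mul_sum, ← Finset.mul_sum]
      have hlast : (ρlast / Ml) * (-s / ρlast - m) ^ 2
          = s ^ 2 / (Ml * ρlast) + (2 * m) * (s / Ml) + m ^ 2 * (ρlast / Ml) := by
        field_simp
        ring
      rw [hlast]
      set P1 : ℝ := ∑ i, x i ^ 2 / (M i.castSucc * ρ i)
      set P2 : ℝ := ∑ i, x i / M i.castSucc
      set P3 : ℝ := ∑ i, ρ i / M i.castSucc
      have hAcm : A = c * m := by rw [hm]; field_simp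
      have hP2 : P2 = c * m + s / Ml := by
        have h4 : A = P2 - s / Ml := hAeq
        rw [hAcm] at h4; linarith
      have hA2 : (1 / c) * A ^ 2 = c * m ^ 2 := by
        rw [hAcm]; field_simp
      rw [hA2, hP2, hceq]
      ring
    rw [← hTQ]
    -- T is positive
    have hterm : ∀ i : Fin N, 0 ≤ (ρ i / M i.castSucc) * (x i / ρ i - m) ^ 2 := by
      intro i
      exact mul_nonneg (le_of_lt (div_pos (hρpos i) (hM _))) (sq_nonneg _)
    have hsumnn : 0 ≤ ∑ i, (ρ i / M i.castSucc) * (x i / ρ i - m) ^ 2 :=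
      Finset.sum_nonneg fun i _ => hterm i
    have hlastnn : 0 ≤ (ρlast / Ml) * (-s / ρlast - m) ^ 2 :=
      mul_nonneg (le_of_lt (div_pos hρl hMlpos)) (sq_nonneg _)
    have hTnn : 0 ≤ T := by rw [hT]; linarith
    rcases lt_or_eq_of_le hTnn with h | h
    · exact h
    · exfalso
      -- T = 0 forces x = 0
      have h' : (∑ i, (ρ i / M i.castSucc) * (x i / ρ i - m) ^ 2)
          + (ρlast / Ml) * (-s / ρlast - m) ^ 2 = 0 := by rw [← hT]; exact h.symm
      have hsum0 : (∑ i, (ρ i / M i.castSucc) * (x i / ρ i - m) ^ 2) = 0 ∧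
          (ρlast / Ml) * (-s / ρlast - m) ^ 2 = 0 := by
        constructor <;> linarith
      have hxi : ∀ i : Fin N, x i = m * ρ i := by
        intro i
        have := (Finset.sum_eq_zero_iff_of_nonneg fun j _ => hterm j).mp hsum0.1 i
          (Finset.mem_univ i)
        have h2 : (x i / ρ i - m) ^ 2 = 0 := by
          rcases mul_eq_zero.mp this with h' | h'
          · exact absurd h' (ne_of_gt (div_pos (hρpos i) (hM _)))
          · exact h'
        have h3 : x i / ρ i = m := by
          have := pow_eq_zero_iff (n := 2) (by norm_num) |>.mp h2
          linarith
        field_simp [(hρpos i).ne'] at h3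
        linarith [h3]
      have hslast : -s = m * ρlast := by
        have h2 : (-s / ρlast - m) ^ 2 = 0 := by
          rcases mul_eq_zero.mp hsum0.2 with h' | h'
          · exact absurd h' (ne_of_gt (div_pos hρl hMlpos))
          · exact h'
        have h3 : -s / ρlast = m := by
          have := pow_eq_zero_iff (n := 2) (by norm_num) |>.mp h2
          linarith
        field_simp [hρl0] at h3
        linarith [h3]
      have hssum : s = m * ∑ i, ρ i := by
        rw [hs, Finset.mul_sum]
        exact Finset.sum_congr rfl fun i _ => hxi i
      have hm0 : m = 0 := by
        have h1 : m * ((∑ i, ρ i) + ρlast) = 0 := by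
          rw [mul_add, ← hssum, ← hslast]; ring
        rw [hone, mul_one] at h1
        exact h1
      apply hx
      funext i
      rw [Pi.zero_apply, hxi i, hm0, zero_mul]
end

section
/- Fix N ≥ 1 and molar masses M_1,…,M_{N+1} > 0. The entropy density h is convex on the open simplex S in the sense that for all ρ', σ' ∈ S one has h(ρ') − h(σ') ≤ Σ_{i=1}^N w_i(ρ')·(ρ_i − σ_i), where w_i(ρ') = (ln x_i(ρ'))/M_i − (ln x_{N+1}(ρ'))/M_{N+1} are the entropy variables evaluated at ρ'. -/
open scoped BigOperators

lemma gibbs_aux {n : ℕ} (a b : Fin n → ℝ) (ha : ∀ i, 0 < a i) (hb : ∀ i, 0 < b i)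
    (hA : 0 < ∑ j, a j) (hB : 0 < ∑ j, b j) :
    ∑ i, b i * Real.log (a i / ∑ j, a j) ≤ ∑ i, b i * Real.log (b i / ∑ j, b j) := by
  set A := ∑ j, a j with hA'
  set B := ∑ j, b j with hB'
  have key : ∀ i ∈ Finset.univ, b i * Real.log (a i / A) - b i * Real.log (b i / B)
      ≤ B / A * a i - b i := by
    intro i _
    have hbne : b i ≠ 0 := (hb i).ne'
    have hAne : A ≠ 0 := hA.ne'
    have hBne : B ≠ 0 := hB.ne'
    have hx : 0 < a i / A := div_pos (ha i) hA
    have hy : 0 < b i / B := div_pos (hb i) hB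
    have ht : 0 < (a i / A) / (b i / B) := div_pos hx hy
    have hlog := Real.log_le_sub_one_of_pos ht
    have h2 : b i * Real.log ((a i / A) / (b i / B)) ≤ b i * ((a i / A) / (b i / B) - 1) :=
      mul_le_mul_of_nonneg_left hlog (hb i).le
    rw [Real.log_div hx.ne' hy.ne', mul_sub, mul_sub, mul_one] at h2
    have h3 : b i * ((a i / A) / (b i / B)) = B / A * a i := by
      field_simp
    linarith [h2]
  have hsum := Finset.sum_le_sum key
  have h0 : ∑ i, (B / A * a i - b i) = 0 := by
    rw [Finset.sum_sub_distrib, ← Finset.mul_sum, ← hA', ← hB']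
    field_simp
    ring
  rw [Finset.sum_sub_distrib] at hsum
  linarith [hsum]

/-- Convexity inequality for the entropy density: for all `ρ', σ'` in the open simplex,
`h(ρ') − h(σ') ≤ Σ_i w_i(ρ')(ρ_i − σ_i)`. -/
theorem stmt6 (N : ℕ) (hN : 1 ≤ N) (M : Fin (N + 1) → ℝ) (hM : ∀ i, 0 < M i) :
    let S : Set (Fin N → ℝ) := {ρ | (∀ i, 0 < ρ i ∧ ρ i < 1) ∧ ∑ i, ρ i < 1}
    let c : (Fin N → ℝ) → ℝ := fun ρ =>
      (∑ i, ρ i / M i.castSucc) + (1 - ∑ i, ρ i) / M (Fin.last N)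
    let x : (Fin N → ℝ) → Fin N → ℝ := fun ρ i => ρ i / (c ρ * M i.castSucc)
    let xlast : (Fin N → ℝ) → ℝ := fun ρ => (1 - ∑ i, ρ i) / (c ρ * M (Fin.last N))
    let h : (Fin N → ℝ) → ℝ := fun ρ =>
      (∑ i, (ρ i / M i.castSucc) * Real.log (x ρ i))
        + ((1 - ∑ i, ρ i) / M (Fin.last N)) * Real.log (xlast ρ)
    let w : (Fin N → ℝ) → Fin N → ℝ := fun ρ i =>
      Real.log (x ρ i) / M i.castSucc - Real.log (xlast ρ) / M (Fin.last N)
    ∀ ρ ∈ S, ∀ σ ∈ S, h ρ - h σ ≤ ∑ i, w ρ i * (ρ i - σ i) := by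
  intro S c x xlast h w ρ hρ σ hσ
  -- extended vectors
  set ρe : Fin (N + 1) → ℝ := Fin.snoc ρ (1 - ∑ i, ρ i) with hρe
  set σe : Fin (N + 1) → ℝ := Fin.snoc σ (1 - ∑ i, σ i) with hσe
  have hρpos : ∀ j, 0 < ρe j := by
    intro j
    refine Fin.lastCases ?_ ?_ j
    · simpa [hρe] using sub_pos.mpr hρ.2
    · intro i; simpa [hρe] using (hρ.1 i).1
  have hσpos : ∀ j, 0 < σe j := by
    intro j
    refine Fin.lastCases ?_ ?_ j
    · simpa [hσe] using sub_pos.mpr hσ.2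
    · intro i; simpa [hσe] using (hσ.1 i).1
  -- the densities over masses
  set a : Fin (N + 1) → ℝ := fun j => ρe j / M j with ha'
  set b : Fin (N + 1) → ℝ := fun j => σe j / M j with hb'
  have hapos : ∀ j, 0 < a j := fun j => div_pos (hρpos j) (hM j)
  have hbpos : ∀ j, 0 < b j := fun j => div_pos (hσpos j) (hM j)
  have hca : c ρ = ∑ j, a j := by
    simp [c, ha', Fin.sum_univ_castSucc, hρe]
  have hcb : c σ = ∑ j, b j := by
    simp [c, hb', Fin.sum_univ_castSucc, hσe]
  have hApos : 0 < ∑ j, a j := Finset.sum_pos (fun j _ => hapos j) Finset.univ_nonempty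
  have hBpos : 0 < ∑ j, b j := Finset.sum_pos (fun j _ => hbpos j) Finset.univ_nonempty
  -- rewrite the log-arguments
  have hxρ : ∀ i : Fin N, x ρ i = a i.castSucc / c ρ := by
    intro i
    simp only [x, ha', hρe, Fin.snoc_castSucc]
    rw [mul_comm, ← div_div]
  have hxlρ : xlast ρ = a (Fin.last N) / c ρ := by
    simp only [xlast, ha', hρe, Fin.snoc_last]
    rw [mul_comm, ← div_div]
  have hxσ : ∀ i : Fin N, x σ i = b i.castSucc / c σ := by
    intro i
    simp only [x, hb', hσe, Fin.snoc_castSucc]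
    rw [mul_comm, ← div_div]
  have hxlσ : xlast σ = b (Fin.last N) / c σ := by
    simp only [xlast, hb', hσe, Fin.snoc_last]
    rw [mul_comm, ← div_div]
  -- entropy as a single sum
  have hMlast : M (Fin.last N) ≠ 0 := (hM (Fin.last N)).ne'
  have hhρ : h ρ = ∑ j, a j * Real.log (a j / c ρ) := by
    rw [Fin.sum_univ_castSucc]
    simp only [h]
    congr 1
    · refine Finset.sum_congr rfl fun i _ => ?_
      rw [hxρ i]
      simp [ha', hρe]
    · rw [hxlρ]
      simp [ha', hρe]
  have hhσ : h σ = ∑ j, b j * Real.log (b j / c σ) := by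
    rw [Fin.sum_univ_castSucc]
    simp only [h]
    congr 1
    · refine Finset.sum_congr rfl fun i _ => ?_
      rw [hxσ i]
      simp [hb', hσe]
    · rw [hxlσ]
      simp [hb', hσe]
  have e1 : ∀ i : Fin N, w ρ i * (ρ i - σ i)
      = (a i.castSucc - b i.castSucc) * Real.log (a i.castSucc / c ρ)
        - (ρ i - σ i) * (Real.log (a (Fin.last N) / c ρ) / M (Fin.last N)) := by
    intro i
    simp only [w, hxρ, hxlρ, ha', hb', hρe, hσe, Fin.snoc_castSucc]
    ring
  have e2 : ∑ i : Fin N, (ρ i - σ i) * (Real.log (a (Fin.last N) / c ρ) / M (Fin.last N))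
      = -((a (Fin.last N) - b (Fin.last N)) * Real.log (a (Fin.last N) / c ρ)) := by
    rw [← Finset.sum_mul, Finset.sum_sub_distrib]
    simp only [ha', hb', hρe, hσe, Fin.snoc_last]
    field_simp
    ring
  have hw : ∑ i, w ρ i * (ρ i - σ i) = ∑ j, (a j - b j) * Real.log (a j / c ρ) := by
    rw [Finset.sum_congr rfl (fun i _ => e1 i), Finset.sum_sub_distrib,
      Fin.sum_univ_castSucc (f := fun j => (a j - b j) * Real.log (a j / c ρ)), e2]
    ring
  have hg := gibbs_aux a b hapos hbpos hApos hBpos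
  rw [← hca, ← hcb] at hg
  have expand : ∑ j, (a j - b j) * Real.log (a j / c ρ)
      = ∑ j, a j * Real.log (a j / c ρ) - ∑ j, b j * Real.log (a j / c ρ) := by
    rw [← Finset.sum_sub_distrib]
    exact Finset.sum_congr rfl fun j _ => by ring
  rw [hhρ, hhσ, hw, expand]
  linarith [hg]
end

section
/- Fix N ≥ 1, molar masses M_1,…,M_{N+1} > 0, and symmetric diffusion coefficients D_{ij} = D_{ji} > 0 for i ≠ j. For every ρ = (ρ_1,…,ρ_{N+1}) with ρ_i ≥ 0 and Σ_{i=1}^{N+1} ρ_i = 1, the N×N matrix A_0(ρ') defined by A^0_{ij} = −(d_{ij} − d_{i,N+1})ρ_i for i ≠ j and A^0_{ii} = Σ_{k=1,k≠i}^{N} (d_{ik} − d_{i,N+1})ρ_k + d_{i,N+1}, where d_{ij} = 1/(c² M_i M_j D_{ij}) and c = Σ_{k=1}^{N+1} ρ_k/M_k, is invertible, and there exists a constant C > 0 depending only on the M_i and D_{ij} such that every entry of A_0(ρ')^{-1} has absolute value at most C, uniformly in such ρ. -/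
open scoped BigOperators

namespace MSaux

noncomputable def msd {N : ℕ} (M : Fin (N+1) → ℝ) (D : Fin (N+1) → Fin (N+1) → ℝ)
    (ρ : Fin (N+1) → ℝ) (i j : Fin (N+1)) : ℝ :=
  1 / ((∑ k, ρ k / M k) ^ 2 * M i * M j * D i j)

noncomputable def Amat (N : ℕ) (M : Fin (N+1) → ℝ) (D : Fin (N+1) → Fin (N+1) → ℝ)
    (ρ : Fin (N+1) → ℝ) : Matrix (Fin N) (Fin N) ℝ :=
  Matrix.of fun i j =>
    if i = j then
      (∑ k ∈ Finset.univ.erase i,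
        (msd M D ρ i.castSucc k.castSucc - msd M D ρ i.castSucc (Fin.last N)) * ρ k.castSucc)
        + msd M D ρ i.castSucc (Fin.last N)
    else -(msd M D ρ i.castSucc j.castSucc - msd M D ρ i.castSucc (Fin.last N)) * ρ i.castSucc

lemma exists_pos {N : ℕ} (ρ : Fin (N+1) → ℝ) (hρ : ∀ i, 0 ≤ ρ i) (hsum : ∑ i, ρ i = 1) :
    ∃ m, 0 < ρ m := by
  by_contra h
  push_neg at h
  have : ∀ i, ρ i = 0 := fun i => le_antisymm (h i) (hρ i)
  simp [this] at hsum

lemma c_pos {N : ℕ} (M : Fin (N+1) → ℝ) (hM : ∀ i, 0 < M i)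
    (ρ : Fin (N+1) → ℝ) (hρ : ∀ i, 0 ≤ ρ i) (hsum : ∑ i, ρ i = 1) :
    0 < ∑ k, ρ k / M k := by
  obtain ⟨m, hm⟩ := exists_pos ρ hρ hsum
  refine Finset.sum_pos' (fun k _ => div_nonneg (hρ k) (hM k).le) ⟨m, Finset.mem_univ m, ?_⟩
  exact div_pos hm (hM m)

lemma msd_pos {N : ℕ} (M : Fin (N+1) → ℝ) (hM : ∀ i, 0 < M i)
    (D : Fin (N+1) → Fin (N+1) → ℝ) (hDpos : ∀ i j, i ≠ j → 0 < D i j)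
    (ρ : Fin (N+1) → ℝ) (hρ : ∀ i, 0 ≤ ρ i) (hsum : ∑ i, ρ i = 1)
    {i j : Fin (N+1)} (hij : i ≠ j) : 0 < msd M D ρ i j := by
  have hc := c_pos M hM ρ hρ hsum
  exact one_div_pos.mpr (mul_pos (mul_pos (mul_pos (pow_pos hc 2) (hM i)) (hM j)) (hDpos i j hij))

lemma msd_symm {N : ℕ} (M : Fin (N+1) → ℝ) (D : Fin (N+1) → Fin (N+1) → ℝ)
    (hDsymm : ∀ i j, D i j = D j i) (ρ : Fin (N+1) → ℝ) (i j : Fin (N+1)) :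
    msd M D ρ i j = msd M D ρ j i := by
  unfold msd; rw [hDsymm i j]; ring


lemma ker_triv {N : ℕ} (M : Fin (N+1) → ℝ) (hM : ∀ i, 0 < M i)
    (D : Fin (N+1) → Fin (N+1) → ℝ) (hDpos : ∀ i j, i ≠ j → 0 < D i j)
    (hDsymm : ∀ i j, D i j = D j i)
    (ρ : Fin (N+1) → ℝ) (hρ : ∀ i, 0 ≤ ρ i) (hsum : ∑ i, ρ i = 1)
    (v : Fin N → ℝ) (hv : (Amat N M D ρ).mulVec v = 0) : v = 0 := by
  classical
  set z : Fin (N+1) → ℝ := Fin.snoc v (-(∑ j, v j)) with hz_def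
  have hz_cast : ∀ i : Fin N, z i.castSucc = v i := fun i => Fin.snoc_castSucc _ _ i
  have hz_last : z (Fin.last N) = -(∑ j, v j) := Fin.snoc_last _ _
  set g : Fin (N+1) → ℝ :=
    fun i => ∑ k ∈ Finset.univ.erase i, msd M D ρ i k * (ρ k * z i - ρ i * z k) with hg_def
  have g_full : ∀ i, g i = ∑ k, msd M D ρ i k * (ρ k * z i - ρ i * z k) := by
    intro i
    exact Finset.sum_erase _ (by ring)
  have hρcast : ∑ k : Fin N, ρ k.castSucc = 1 - ρ (Fin.last N) := by
    have h := Fin.sum_univ_castSucc (f := ρ)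
    rw [hsum] at h; linarith
  -- step A : g (castSucc i) = (A v) i
  have hg_cast : ∀ i : Fin N, g i.castSucc = (Amat N M D ρ).mulVec v i := by
    intro i
    have hAv : (Amat N M D ρ).mulVec v i
        = ((∑ k ∈ Finset.univ.erase i,
              (msd M D ρ i.castSucc k.castSucc - msd M D ρ i.castSucc (Fin.last N)) * ρ k.castSucc)
            + msd M D ρ i.castSucc (Fin.last N)) * v i
          + ∑ j ∈ Finset.univ.erase i,
              (-(msd M D ρ i.castSucc j.castSucc - msd M D ρ i.castSucc (Fin.last N)) * ρ i.castSucc) * v j := by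
      rw [Matrix.mulVec, dotProduct, ← Finset.add_sum_erase _ _ (Finset.mem_univ i)]
      congr 1
      · simp [Amat]
      · refine Finset.sum_congr rfl fun j hj => ?_
        have hji : i ≠ j := (Finset.ne_of_mem_erase hj).symm
        simp [Amat, hji]
    have hgl : g i.castSucc
        = ∑ k ∈ Finset.univ.erase i,
            msd M D ρ i.castSucc k.castSucc * (ρ k.castSucc * v i - ρ i.castSucc * v k)
          + msd M D ρ i.castSucc (Fin.last N) * (ρ (Fin.last N) * v i + ρ i.castSucc * (∑ j, v j)) := by
      rw [g_full, Fin.sum_univ_castSucc]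
      simp only [hz_cast, hz_last]
      rw [← Finset.sum_erase (Finset.univ) (a := i)
            (f := fun k : Fin N => msd M D ρ i.castSucc k.castSucc * (ρ k.castSucc * v i - ρ i.castSucc * v k))
            (by ring)]
      congr 1
      ring
    rw [hgl, hAv]
    set dL := msd M D ρ i.castSucc (Fin.last N) with hdL
    set S1 := ∑ k ∈ Finset.univ.erase i, msd M D ρ i.castSucc k.castSucc * ρ k.castSucc with hS1
    set S2 := ∑ k ∈ Finset.univ.erase i, msd M D ρ i.castSucc k.castSucc * v k with hS2
    have e1 : ∑ k ∈ Finset.univ.erase i,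
        msd M D ρ i.castSucc k.castSucc * (ρ k.castSucc * v i - ρ i.castSucc * v k)
        = v i * S1 - ρ i.castSucc * S2 := by
      rw [hS1, hS2, Finset.mul_sum, Finset.mul_sum, ← Finset.sum_sub_distrib]
      exact Finset.sum_congr rfl fun k _ => by ring
    have e2 : ∑ k ∈ Finset.univ.erase i,
        (msd M D ρ i.castSucc k.castSucc - dL) * ρ k.castSucc
        = S1 - dL * ((1 - ρ (Fin.last N)) - ρ i.castSucc) := by
      have hS3 : ∑ k ∈ Finset.univ.erase i, ρ k.castSucc
          = (1 - ρ (Fin.last N)) - ρ i.castSucc := by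
        rw [Finset.sum_erase_eq_sub (Finset.mem_univ i), hρcast]
      rw [hS1, ← hS3, Finset.mul_sum, ← Finset.sum_sub_distrib]
      exact Finset.sum_congr rfl fun k _ => by ring
    have e3 : ∑ j ∈ Finset.univ.erase i,
        (-(msd M D ρ i.castSucc j.castSucc - dL) * ρ i.castSucc) * v j
        = ρ i.castSucc * dL * ((∑ j, v j) - v i) - ρ i.castSucc * S2 := by
      have hS4 : ∑ k ∈ Finset.univ.erase i, v k = (∑ j, v j) - v i :=
        Finset.sum_erase_eq_sub (Finset.mem_univ i)
      rw [hS2, ← hS4, Finset.mul_sum, Finset.mul_sum, ← Finset.sum_sub_distrib]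
      exact Finset.sum_congr rfl fun k _ => by ring
    rw [e1, e2, e3]
    ring
  -- step B : sum of g over all indices vanishes
  have hanti : ∀ i k : Fin (N+1),
      msd M D ρ k i * (ρ i * z k - ρ k * z i) = -(msd M D ρ i k * (ρ k * z i - ρ i * z k)) := by
    intro i k; rw [msd_symm M D hDsymm]; ring
  have hg_sum : ∑ i, g i = 0 := by
    have h1 : ∑ i, g i = ∑ i, ∑ k, msd M D ρ i k * (ρ k * z i - ρ i * z k) :=
      Finset.sum_congr rfl fun i _ => g_full i
    have h2 : ∑ i : Fin (N+1), ∑ k : Fin (N+1), msd M D ρ i k * (ρ k * z i - ρ i * z k)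
        = ∑ k : Fin (N+1), ∑ i : Fin (N+1), msd M D ρ i k * (ρ k * z i - ρ i * z k) :=
      Finset.sum_comm
    have h3 : ∑ k : Fin (N+1), ∑ i : Fin (N+1), msd M D ρ i k * (ρ k * z i - ρ i * z k)
        = -∑ i : Fin (N+1), ∑ k : Fin (N+1), msd M D ρ i k * (ρ k * z i - ρ i * z k) := by
      rw [← Finset.sum_neg_distrib]
      refine Finset.sum_congr rfl fun k _ => ?_
      rw [← Finset.sum_neg_distrib]
      exact Finset.sum_congr rfl fun i _ => (hanti k i).symm ▸ rfl
    rw [h1]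
    have := h2.trans h3
    linarith
  have hg0 : ∀ i, g i = 0 := by
    have hglast : g (Fin.last N) = 0 := by
      have h := Fin.sum_univ_castSucc (f := g)
      rw [hg_sum] at h
      have hz : ∀ i : Fin N, g i.castSucc = 0 := by
        intro i; rw [hg_cast i, hv]; rfl
      have : ∑ i : Fin N, g i.castSucc = 0 := Finset.sum_eq_zero fun i _ => hz i
      linarith
    intro i
    refine Fin.lastCases hglast (fun i => ?_) i
    rw [hg_cast i, hv]; rfl
  -- step C : components with vanishing density vanish
  obtain ⟨m0, hm0⟩ := exists_pos ρ hρ hsum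
  have hz0 : ∀ i, ρ i = 0 → z i = 0 := by
    intro i hi
    have hgi : g i = z i * ∑ k ∈ Finset.univ.erase i, msd M D ρ i k * ρ k := by
      show ∑ k ∈ Finset.univ.erase i, msd M D ρ i k * (ρ k * z i - ρ i * z k)
          = z i * ∑ k ∈ Finset.univ.erase i, msd M D ρ i k * ρ k
      rw [Finset.mul_sum]
      exact Finset.sum_congr rfl fun k _ => by rw [hi]; ring
    have hpos : 0 < ∑ k ∈ Finset.univ.erase i, msd M D ρ i k * ρ k := by
      refine Finset.sum_pos' (fun k hk => ?_) ⟨m0, ?_, ?_⟩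
      · exact mul_nonneg (msd_pos M hM D hDpos ρ hρ hsum
          (Ne.symm (Finset.mem_erase.1 hk).1)).le (hρ k)
      · exact Finset.mem_erase.2 ⟨fun h => by rw [h, hi] at hm0; exact lt_irrefl _ hm0,
          Finset.mem_univ _⟩
      · exact mul_pos (msd_pos M hM D hDpos ρ hρ hsum
          (fun h => by rw [← h, hi] at hm0; exact lt_irrefl _ hm0)) hm0
    have := hg0 i
    rw [hgi] at this
    rcases mul_eq_zero.1 this with h | h
    · exact h
    · exact absurd h hpos.ne'
  -- step D : maximize z i / ρ i over positive components
  set P := Finset.univ.filter (fun i : Fin (N+1) => 0 < ρ i) with hP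
  have hPne : P.Nonempty := ⟨m0, Finset.mem_filter.2 ⟨Finset.mem_univ _, hm0⟩⟩
  obtain ⟨m, hmP, hmax⟩ := P.exists_max_image (fun i => z i / ρ i) hPne
  have hρm : 0 < ρ m := (Finset.mem_filter.1 hmP).2
  have hterm : ∀ k ∈ Finset.univ.erase m, 0 ≤ msd M D ρ m k * (ρ k * z m - ρ m * z k) := by
    intro k hk
    have hkm : k ≠ m := (Finset.mem_erase.1 hk).1
    have hd := (msd_pos M hM D hDpos ρ hρ hsum hkm.symm).le
    rcases (hρ k).eq_or_lt with h0 | hpos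
    · rw [hz0 k h0.symm, ← h0]
      simp
    · have hu : z k / ρ k ≤ z m / ρ m :=
        hmax k (Finset.mem_filter.2 ⟨Finset.mem_univ _, hpos⟩)
      rw [div_le_div_iff₀ hpos hρm] at hu
      apply mul_nonneg hd
      nlinarith
  have hall := (Finset.sum_eq_zero_iff_of_nonneg hterm).1 (hg0 m)
  set lam := z m / ρ m with hlam_def
  have hzm : z m = lam * ρ m := by
    rw [hlam_def]; field_simp
  have hzlam : ∀ i, z i = lam * ρ i := by
    intro i
    rcases (hρ i).eq_or_lt with h0 | hipos
    · rw [hz0 i h0.symm, ← h0]; ring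
    · rcases eq_or_ne i m with rfl | hne
      · exact hzm
      · have h := hall i (Finset.mem_erase.2 ⟨hne, Finset.mem_univ _⟩)
        rcases mul_eq_zero.1 h with h' | h'
        · exact absurd h' (msd_pos M hM D hDpos ρ hρ hsum hne.symm).ne'
        · have : ρ i * z m - ρ m * z i = 0 := h'
          rw [hzm] at this
          have : ρ m * z i = lam * ρ i * ρ m := by nlinarith
          have hρm' := hρm.ne'
          field_simp at this ⊢
          nlinarith
  have hzsum : ∑ i, z i = 0 := by
    rw [Fin.sum_univ_castSucc]
    simp only [hz_cast, hz_last]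
    ring
  have hlam0 : lam = 0 := by
    have h : ∑ i, z i = lam * ∑ i, ρ i := by
      rw [Finset.mul_sum]
      exact Finset.sum_congr rfl fun i _ => hzlam i
    rw [hzsum, hsum, mul_one] at h
    exact h.symm
  funext i
  have := hzlam i.castSucc
  rw [hz_cast i, hlam0, zero_mul] at this
  simpa using this


lemma det_ne_zero {N : ℕ} (M : Fin (N+1) → ℝ) (hM : ∀ i, 0 < M i)
    (D : Fin (N+1) → Fin (N+1) → ℝ) (hDpos : ∀ i j, i ≠ j → 0 < D i j)
    (hDsymm : ∀ i j, D i j = D j i)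
    (ρ : Fin (N+1) → ℝ) (hρ : ∀ i, 0 ≤ ρ i) (hsum : ∑ i, ρ i = 1) :
    (Amat N M D ρ).det ≠ 0 := by
  intro h
  obtain ⟨v, hv0, hv⟩ := Matrix.exists_mulVec_eq_zero_iff.2 h
  exact hv0 (ker_triv M hM D hDpos hDsymm ρ hρ hsum v hv)

lemma amat_contOn {N : ℕ} (M : Fin (N+1) → ℝ) (hM : ∀ i, 0 < M i)
    (D : Fin (N+1) → Fin (N+1) → ℝ) (hDpos : ∀ i j, i ≠ j → 0 < D i j) :
    ContinuousOn (fun ρ => Amat N M D ρ) (stdSimplex ℝ (Fin (N+1))) := by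
  have hccont : Continuous fun ρ : Fin (N+1) → ℝ => ∑ k, ρ k / M k :=
    continuous_finset_sum _ fun k _ => (continuous_apply k).div_const _
  have hcne : ∀ ρ ∈ stdSimplex ℝ (Fin (N+1)), (∑ k, ρ k / M k) ≠ 0 := fun ρ hρ =>
    (c_pos M hM ρ hρ.1 hρ.2).ne'
  have hmsd : ∀ i j : Fin (N+1), i ≠ j →
      ContinuousOn (fun ρ => msd M D ρ i j) (stdSimplex ℝ (Fin (N+1))) := by
    intro i j hij
    unfold msd
    refine ContinuousOn.div continuousOn_const ?_ ?_
    · exact ((((hccont.pow 2).mul continuous_const).mul continuous_const).mul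
        continuous_const).continuousOn
    · intro ρ hρs
      exact mul_ne_zero (mul_ne_zero (mul_ne_zero (pow_ne_zero 2 (hcne ρ hρs)) (hM i).ne')
        (hM j).ne') (hDpos i j hij).ne'
  refine continuousOn_pi.2 ?_
  intro i
  refine continuousOn_pi.2 ?_
  intro j
  show ContinuousOn (fun ρ => Amat N M D ρ i j) (stdSimplex ℝ (Fin (N+1)))
  rcases eq_or_ne i j with rfl | hij
  · have heq : (fun ρ => Amat N M D ρ i i)
        = fun ρ => (∑ k ∈ Finset.univ.erase i,
            (msd M D ρ i.castSucc k.castSucc - msd M D ρ i.castSucc (Fin.last N)) * ρ k.castSucc)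
          + msd M D ρ i.castSucc (Fin.last N) := by
      funext ρ; simp [Amat]
    rw [heq]
    refine ContinuousOn.add ?_ (hmsd _ _ (Fin.castSucc_lt_last i).ne)
    refine continuousOn_finset_sum _ fun k hk => ?_
    have hik : i.castSucc ≠ k.castSucc := by
      simp only [ne_eq, Fin.castSucc_inj]
      exact fun h => (Finset.mem_erase.1 hk).1 (h.symm)
    exact ((hmsd _ _ hik).sub (hmsd _ _ (Fin.castSucc_lt_last i).ne)).mul
      (continuous_apply _).continuousOn
  · have heq : (fun ρ => Amat N M D ρ i j)
        = fun ρ => -(msd M D ρ i.castSucc j.castSucc - msd M D ρ i.castSucc (Fin.last N))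
            * ρ i.castSucc := by
      funext ρ; simp [Amat, hij]
    rw [heq]
    have hik : i.castSucc ≠ j.castSucc := by simpa [ne_eq, Fin.castSucc_inj] using hij
    exact (((hmsd _ _ hik).sub (hmsd _ _ (Fin.castSucc_lt_last i).ne)).neg).mul
      (continuous_apply _).continuousOn

end MSaux

/-- The reduced Maxwell–Stefan matrix `A_0(ρ')` is invertible, and the entries of its
inverse are bounded uniformly in `ρ` by a constant depending only on the molar masses
and the diffusion coefficients. -/
theorem stmt7 (N : ℕ) (hN : 1 ≤ N) (M : Fin (N + 1) → ℝ) (hM : ∀ i, 0 < M i)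
    (D : Fin (N + 1) → Fin (N + 1) → ℝ) (hDpos : ∀ i j, i ≠ j → 0 < D i j)
    (hDsymm : ∀ i j, D i j = D j i) :
    ∃ C > 0, ∀ ρ : Fin (N + 1) → ℝ, (∀ i, 0 ≤ ρ i) → (∑ i, ρ i) = 1 →
      let c : ℝ := ∑ k, ρ k / M k
      let d : Fin (N + 1) → Fin (N + 1) → ℝ := fun i j => 1 / (c ^ 2 * M i * M j * D i j)
      let A : Matrix (Fin N) (Fin N) ℝ := Matrix.of fun i j =>
        if i = j then
          (∑ k ∈ Finset.univ.erase i,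
            (d i.castSucc k.castSucc - d i.castSucc (Fin.last N)) * ρ k.castSucc)
            + d i.castSucc (Fin.last N)
        else -(d i.castSucc j.castSucc - d i.castSucc (Fin.last N)) * ρ i.castSucc
      IsUnit A.det ∧ ∀ i j, |A⁻¹ i j| ≤ C := by
  classical
  set s := stdSimplex ℝ (Fin (N + 1)) with hs_def
  have hcont : ContinuousOn (fun ρ => MSaux.Amat N M D ρ) s := MSaux.amat_contOn M hM D hDpos
  have hdetc : ContinuousOn (fun ρ => (MSaux.Amat N M D ρ).det) s :=
    (Continuous.matrix_det continuous_id).comp_continuousOn hcont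
  have hadjc : ∀ i j : Fin N,
      ContinuousOn (fun ρ => (MSaux.Amat N M D ρ).adjugate i j) s := by
    intro i j
    have h1 : Continuous fun A : Matrix (Fin N) (Fin N) ℝ => A.adjugate i j :=
      ((continuous_apply j).comp (continuous_apply i)).comp
        (Continuous.matrix_adjugate continuous_id)
    exact h1.comp_continuousOn hcont
  set f : (Fin (N + 1) → ℝ) → ℝ := fun ρ =>
    (∑ i, ∑ j, |(MSaux.Amat N M D ρ).adjugate i j|) / |(MSaux.Amat N M D ρ).det| with hf_def
  have hfcont : ContinuousOn f s := by
    refine ContinuousOn.div ?_ hdetc.abs ?_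
    · exact continuousOn_finset_sum _ fun i _ =>
        continuousOn_finset_sum _ fun j _ => (hadjc i j).abs
    · intro ρ hρs
      exact abs_ne_zero.2 (MSaux.det_ne_zero M hM D hDpos hDsymm ρ hρs.1 hρs.2)
  have hsne : s.Nonempty := by
    refine ⟨fun i => if i = 0 then 1 else 0, ⟨fun i => by positivity, by simp⟩⟩
  obtain ⟨x, hxs, hmax⟩ := (isCompact_stdSimplex ℝ (Fin (N + 1))).exists_isMaxOn hsne hfcont
  refine ⟨max (f x) 0 + 1, by positivity, ?_⟩
  intro ρ hρ0 hsum1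
  intro c d A
  have hA : A = MSaux.Amat N M D ρ := rfl
  have hρs : ρ ∈ s := ⟨hρ0, hsum1⟩
  have hdetne : (MSaux.Amat N M D ρ).det ≠ 0 :=
    MSaux.det_ne_zero M hM D hDpos hDsymm ρ hρ0 hsum1
  constructor
  · rw [hA]
    exact isUnit_iff_ne_zero.2 hdetne
  · intro i j
    rw [hA]
    have hinv : (MSaux.Amat N M D ρ)⁻¹ i j
        = (MSaux.Amat N M D ρ).det⁻¹ * (MSaux.Amat N M D ρ).adjugate i j := by
      rw [Matrix.inv_def, Ring.inverse_eq_inv', Matrix.smul_apply, smul_eq_mul]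
    have hle1 : |(MSaux.Amat N M D ρ).adjugate i j|
        ≤ ∑ i', ∑ j', |(MSaux.Amat N M D ρ).adjugate i' j'| := by
      calc |(MSaux.Amat N M D ρ).adjugate i j|
          ≤ ∑ j', |(MSaux.Amat N M D ρ).adjugate i j'| :=
            Finset.single_le_sum (f := fun j' => |(MSaux.Amat N M D ρ).adjugate i j'|)
              (fun _ _ => abs_nonneg _) (Finset.mem_univ j)
        _ ≤ ∑ i', ∑ j', |(MSaux.Amat N M D ρ).adjugate i' j'| :=
            Finset.single_le_sum (f := fun i' => ∑ j', |(MSaux.Amat N M D ρ).adjugate i' j'|)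
              (fun _ _ => Finset.sum_nonneg fun _ _ => abs_nonneg _) (Finset.mem_univ i)
    have habs : |(MSaux.Amat N M D ρ)⁻¹ i j|
        = |(MSaux.Amat N M D ρ).adjugate i j| / |(MSaux.Amat N M D ρ).det| := by
      rw [hinv, abs_mul, abs_inv, mul_comm, div_eq_mul_inv]
    have hfρ : |(MSaux.Amat N M D ρ)⁻¹ i j| ≤ f ρ := by
      rw [habs]
      have hfρeq : f ρ = (∑ i', ∑ j', |(MSaux.Amat N M D ρ).adjugate i' j'|)
          / |(MSaux.Amat N M D ρ).det| := rfl
      rw [hfρeq]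
      exact (div_le_div_iff_of_pos_right (abs_pos.2 hdetne)).2 hle1
    have hfx : f ρ ≤ f x := hmax hρs
    have : f x ≤ max (f x) 0 := le_max_left _ _
    linarith
end

section
/- Fix N ≥ 1 and molar masses M_1,…,M_{N+1} > 0. The map W : S → ℝ^N defined on the open simplex S = {ρ' ∈ (0,1)^N : Σ_{i=1}^N ρ_i < 1} by W_i(ρ') = (ln x_i)/M_i − (ln x_{N+1})/M_{N+1} is a bijection from S onto ℝ^N; in particular, for every w ∈ ℝ^N there exists a unique ρ' = (ρ_1,…,ρ_N) ∈ (0,1)^N with Σ_{i=1}^N ρ_i < 1 satisfying w = W(ρ'), and the inverse map w ↦ ρ'(w) takes values in the bounded set (0,1)^N. -/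
open scoped BigOperators

lemma stmt8_aux (N : ℕ) (hN : 0 < N) (a b : Fin N → ℝ) (ha : ∀ i, 0 < a i)
    (hb : ∀ i, 0 < b i) :
    ∃! t : ℝ, t ∈ Set.Ioo (0:ℝ) 1 ∧ (∑ i, t ^ (a i) * b i) + t = 1 := by
  set g : ℝ → ℝ := fun t => (∑ i, t ^ (a i) * b i) + t with hg
  have hmono : StrictMonoOn g (Set.Ici 0) := by
    intro s hs t ht hst
    have hsum : ∀ i ∈ Finset.univ, s ^ a i * b i ≤ t ^ a i * b i := by
      intro i _
      exact mul_le_mul_of_nonneg_right (Real.rpow_le_rpow hs hst.le (ha i).le) (hb i).le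
    exact add_lt_add_of_le_of_lt (Finset.sum_le_sum hsum) hst
  have hcont : ContinuousOn g (Set.Icc 0 1) := by
    apply ContinuousOn.add _ continuousOn_id
    apply continuousOn_finset_sum
    intro i _
    exact (continuousOn_id.rpow_const (fun x _ => Or.inr (ha i).le)).mul continuousOn_const
  have hg0 : g 0 = 0 := by
    have : ∀ i ∈ Finset.univ, (0:ℝ) ^ a i * b i = 0 := by
      intro i _
      rw [Real.zero_rpow (ha i).ne', zero_mul]
    simp [hg, Finset.sum_eq_zero this]
  have hg1 : 1 < g 1 := by
    have hpos : 0 < ∑ i, (1:ℝ) ^ a i * b i := by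
      apply Finset.sum_pos
      · intro i _
        rw [Real.one_rpow, one_mul]; exact hb i
      · exact Finset.univ_nonempty_iff.mpr ⟨⟨0, hN⟩⟩
    simp only [hg]
    linarith
  have hmem : (1:ℝ) ∈ Set.Ioo (g 0) (g 1) := by rw [hg0]; exact ⟨one_pos, hg1⟩
  obtain ⟨t, ht, hgt⟩ := intermediate_value_Ioo (by norm_num : (0:ℝ) ≤ 1) hcont hmem
  refine ⟨t, ⟨ht, hgt⟩, ?_⟩
  rintro t' ⟨ht', hgt'⟩
  exact hmono.injOn (Set.mem_Ici.mpr ht'.1.le) (Set.mem_Ici.mpr ht.1.le) (hgt'.trans hgt.symm)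

/-- The entropy-variable map `W : S → ℝ^N` is a bijection from the open simplex `S`
onto all of `ℝ^N`; in particular every `w ∈ ℝ^N` comes from a unique density vector
`ρ' ∈ (0,1)^N` with `Σ ρ_i < 1`. -/
theorem stmt8 (N : ℕ) (hN : 1 ≤ N) (M : Fin (N + 1) → ℝ) (hM : ∀ i, 0 < M i) :
    let S : Set (Fin N → ℝ) := {ρ | (∀ i, 0 < ρ i ∧ ρ i < 1) ∧ ∑ i, ρ i < 1}
    let c : (Fin N → ℝ) → ℝ := fun ρ =>
      (∑ i, ρ i / M i.castSucc) + (1 - ∑ i, ρ i) / M (Fin.last N)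
    let W : (Fin N → ℝ) → Fin N → ℝ := fun ρ i =>
      Real.log (ρ i / (c ρ * M i.castSucc)) / M i.castSucc
        - Real.log ((1 - ∑ k, ρ k) / (c ρ * M (Fin.last N))) / M (Fin.last N)
    Set.BijOn W S Set.univ := by
  intro S c W
  have hML : 0 < M (Fin.last N) := hM (Fin.last N)
  set a : Fin N → ℝ := fun i => M i.castSucc / M (Fin.last N) with ha_def
  have ha : ∀ i, 0 < a i := fun i => div_pos (hM _) hML
  -- associated data for ρ ∈ S
  set x : (Fin N → ℝ) → Fin N → ℝ := fun ρ i => ρ i / (c ρ * M i.castSucc) with hx_def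
  set T : (Fin N → ℝ) → ℝ := fun ρ => (1 - ∑ k, ρ k) / (c ρ * M (Fin.last N)) with hT_def
  have hc : ∀ ρ ∈ S, 0 < c ρ := by
    rintro ρ ⟨h1, h2⟩
    have : 0 ≤ ∑ i, ρ i / M i.castSucc :=
      Finset.sum_nonneg fun i _ => div_nonneg (h1 i).1.le (hM _).le
    have h3 : 0 < (1 - ∑ i, ρ i) / M (Fin.last N) := div_pos (by linarith) hML
    simp only [c]; linarith
  have hxpos : ∀ ρ ∈ S, ∀ i, 0 < x ρ i := by
    rintro ρ hρ i
    exact div_pos (hρ.1 i).1 (mul_pos (hc ρ hρ) (hM _))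
  have hTpos : ∀ ρ ∈ S, 0 < T ρ := by
    rintro ρ hρ
    exact div_pos (by linarith [hρ.2]) (mul_pos (hc ρ hρ) hML)
  have hsum1 : ∀ ρ ∈ S, (∑ i, x ρ i) + T ρ = 1 := by
    rintro ρ hρ
    have hcρ := (hc ρ hρ).ne'
    have : ∀ i ∈ Finset.univ, x ρ i = (ρ i / M i.castSucc) / c ρ := by
      intro i _
      simp only [x]
      rw [div_mul_eq_div_div_swap]
    rw [Finset.sum_congr rfl this, ← Finset.sum_div]
    simp only [T]
    rw [div_mul_eq_div_div_swap, ← add_div]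
    exact div_self hcρ
  have hTlt1 : ∀ ρ ∈ S, T ρ < 1 := by
    rintro ρ hρ
    have h := hsum1 ρ hρ
    have : 0 < ∑ i, x ρ i :=
      Finset.sum_pos (fun i _ => hxpos ρ hρ i) (Finset.univ_nonempty_iff.mpr ⟨⟨0, hN⟩⟩)
    linarith
  have hxW : ∀ ρ ∈ S, ∀ i, x ρ i = (T ρ) ^ (a i) * Real.exp (M i.castSucc * W ρ i) := by
    rintro ρ hρ i
    have hxp := hxpos ρ hρ i
    have hTp := hTpos ρ hρ
    have hWi : W ρ i = Real.log (x ρ i) / M i.castSucc - Real.log (T ρ) / M (Fin.last N) := rfl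
    rw [Real.rpow_def_of_pos hTp, ← Real.exp_add]
    rw [← Real.exp_log hxp]
    congr 1
    rw [hWi]
    have hMi := (hM i.castSucc).ne'
    have hML' := hML.ne'
    simp only [ha_def]
    field_simp
    ring
  have hrec : ∀ ρ ∈ S, ∀ i,
      ρ i = M i.castSucc * x ρ i /
        ((∑ j, M j.castSucc * x ρ j) + M (Fin.last N) * T ρ) := by
    rintro ρ hρ i
    have hcρ := hc ρ hρ
    have hden : (∑ j, M j.castSucc * x ρ j) + M (Fin.last N) * T ρ = 1 / c ρ := by
      have h1 : ∀ j ∈ Finset.univ, M j.castSucc * x ρ j = ρ j / c ρ := by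
        intro j _
        simp only [x]
        field_simp [hcρ.ne', (hM j.castSucc).ne']
      have h2 : M (Fin.last N) * T ρ = (1 - ∑ k, ρ k) / c ρ := by
        simp only [T]
        field_simp [hcρ.ne', hML.ne']
      rw [Finset.sum_congr rfl h1, h2, ← Finset.sum_div, ← add_div]
      field_simp
      ring
    rw [hden]
    simp only [x]
    field_simp [hcρ.ne', (hM i.castSucc).ne']
  refine ⟨fun _ _ => trivial, ?_, ?_⟩
  · -- injectivity
    intro ρ hρ σ hσ hW
    obtain ⟨t, -, huniq⟩ := stmt8_aux N hN a (fun i => Real.exp (M i.castSucc * W ρ i)) ha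
      (fun i => Real.exp_pos _)
    have hTρ : T ρ = t := huniq _ ⟨⟨hTpos ρ hρ, hTlt1 ρ hρ⟩, by
      rw [← hsum1 ρ hρ]; congr 1; exact Finset.sum_congr rfl fun i _ => (hxW ρ hρ i).symm⟩
    have hTσ : T σ = t := huniq _ ⟨⟨hTpos σ hσ, hTlt1 σ hσ⟩, by
      rw [← hsum1 σ hσ]; congr 1
      exact Finset.sum_congr rfl fun i _ => by rw [hxW σ hσ i, hW]⟩
    have hxeq : ∀ i, x ρ i = x σ i := by
      intro i
      rw [hxW ρ hρ i, hxW σ hσ i, hTρ, hTσ, hW]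
    funext i
    rw [hrec ρ hρ i, hrec σ hσ i]
    congr 1
    · rw [hxeq]
    · rw [hTρ, hTσ]
      congr 1
      exact Finset.sum_congr rfl fun j _ => by rw [hxeq]
  · -- surjectivity
    intro w _
    obtain ⟨t, ⟨⟨ht0, ht1⟩, hteq⟩, -⟩ := stmt8_aux N hN a
      (fun i => Real.exp (M i.castSucc * w i)) ha (fun i => Real.exp_pos _)
    set y : Fin N → ℝ := fun i => t ^ (a i) * Real.exp (M i.castSucc * w i) with hy_def
    have hypos : ∀ i, 0 < y i := fun i =>
      mul_pos (Real.rpow_pos_of_pos ht0 _) (Real.exp_pos _)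
    set D : ℝ := (∑ j, M j.castSucc * y j) + M (Fin.last N) * t with hD_def
    have hsumMy : 0 ≤ ∑ j, M j.castSucc * y j :=
      Finset.sum_nonneg fun j _ => (mul_pos (hM _) (hypos j)).le
    have hD : 0 < D := by
      have := mul_pos hML ht0
      simp only [hD_def]; linarith
    set ρ : Fin N → ℝ := fun i => M i.castSucc * y i / D with hρ_def
    have hρpos : ∀ i, 0 < ρ i := fun i => div_pos (mul_pos (hM _) (hypos i)) hD
    have hρsum : ∑ i, ρ i = 1 - M (Fin.last N) * t / D := by
      simp only [ρ]
      rw [← Finset.sum_div]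
      field_simp
      simp only [hD_def]
      ring
    have hρsumlt : ∑ i, ρ i < 1 := by
      rw [hρsum]
      have : 0 < M (Fin.last N) * t / D := div_pos (mul_pos hML ht0) hD
      linarith
    have hρS : ρ ∈ S := by
      refine ⟨fun i => ⟨hρpos i, ?_⟩, hρsumlt⟩
      have hle : M i.castSucc * y i ≤ ∑ j, M j.castSucc * y j :=
        Finset.single_le_sum (fun j _ => (mul_pos (hM _) (hypos j)).le) (Finset.mem_univ i)
      have : M i.castSucc * y i < D := by
        have := mul_pos hML ht0
        simp only [hD_def]; linarith
      rw [hρ_def]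
      exact (div_lt_one hD).mpr this
    have h1ms : 1 - ∑ k, ρ k = M (Fin.last N) * t / D := by rw [hρsum]; ring
    have hcρ : c ρ = 1 / D := by
      simp only [c]
      rw [h1ms]
      have h1 : ∀ i ∈ Finset.univ, ρ i / M i.castSucc = y i / D := by
        intro i _
        simp only [ρ]
        field_simp [hD.ne', (hM i.castSucc).ne']
      have h2 : M (Fin.last N) * t / D / M (Fin.last N) = t / D := by
        field_simp [hD.ne', hML.ne']
      rw [Finset.sum_congr rfl h1, h2, ← Finset.sum_div, ← add_div]
      have hsy : ∑ i, y i = ∑ i, t ^ (a i) * Real.exp (M i.castSucc * w i) := rfl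
      rw [hsy, hteq]
    refine ⟨ρ, hρS, ?_⟩
    funext i
    have hxρ : ρ i / (c ρ * M i.castSucc) = y i := by
      rw [hcρ]
      simp only [ρ]
      field_simp [hD.ne', (hM i.castSucc).ne']
    have hTρ : (1 - ∑ k, ρ k) / (c ρ * M (Fin.last N)) = t := by
      rw [hcρ, h1ms]
      field_simp [hD.ne', hML.ne']
    show Real.log (ρ i / (c ρ * M i.castSucc)) / M i.castSucc
        - Real.log ((1 - ∑ k, ρ k) / (c ρ * M (Fin.last N))) / M (Fin.last N) = w i
    rw [hxρ, hTρ]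
    simp only [y]
    rw [Real.log_mul (Real.rpow_pos_of_pos ht0 _).ne' (Real.exp_pos _).ne',
      Real.log_rpow ht0, Real.log_exp]
    simp only [ha_def]
    field_simp [(hM i.castSucc).ne', hML.ne']
    ring
end

section
/- Fix N ≥ 1, molar masses M_1,…,M_{N+1} > 0, and symmetric diffusion coefficients D_{ij} = D_{ji} > 0 for i ≠ j. For every ρ' in the open simplex S, the N×N matrix B(ρ') = A_0(ρ')^{-1} G(ρ')^{-1} is symmetric and positive definite, and there exists a constant C > 0 depending only on the M_i and D_{ij} such that every entry of B(ρ') has absolute value at most C, uniformly for ρ' ∈ S. -/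
open scoped BigOperators

open Finset Matrix

private lemma ite_dot {n : ℕ} (v : Fin n → ℝ) (i j : Fin n) (α β : ℝ) :
    ∑ a, (α * (if a = i then (1:ℝ) else 0) + β * (if a = j then 1 else 0)) * v a
      = α * v i + β * v j := by
  have h : ∀ a, (α * (if a = i then (1:ℝ) else 0) + β * (if a = j then 1 else 0)) * v a
      = α * (if a = i then v a else 0) + β * (if a = j then v a else 0) := by
    intro a; split_ifs <;> ring
  rw [Finset.sum_congr rfl fun a _ => h a, Finset.sum_add_distrib,
    ← Finset.mul_sum, ← Finset.mul_sum, Finset.sum_ite_eq', Finset.sum_ite_eq']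
  simp

private lemma qf_eval {n : ℕ} (Q : Matrix (Fin n) (Fin n) ℝ) (i j : Fin n) (α β : ℝ) :
    (fun k => α * (if k = i then (1:ℝ) else 0) + β * (if k = j then 1 else 0)) ⬝ᵥ
      Q *ᵥ (fun k => α * (if k = i then (1:ℝ) else 0) + β * (if k = j then 1 else 0))
      = α * (α * Q i i + β * Q i j) + β * (α * Q j i + β * Q j j) := by
  have inner : ∀ a, (Q *ᵥ (fun k => α * (if k = i then (1:ℝ) else 0) + β * (if k = j then 1 else 0))) a
      = α * Q a i + β * Q a j := by
    intro a
    show ∑ b, Q a b * (α * (if b = i then (1:ℝ) else 0) + β * (if b = j then 1 else 0)) = _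
    rw [Finset.sum_congr rfl fun b _ =>
      show Q a b * (α * (if b = i then (1:ℝ) else 0) + β * (if b = j then 1 else 0))
        = (α * (if b = i then (1:ℝ) else 0) + β * (if b = j then 1 else 0)) * Q a b from mul_comm _ _]
    exact ite_dot (Q a) i j α β
  show ∑ a, (α * (if a = i then (1:ℝ) else 0) + β * (if a = j then 1 else 0)) *
      (Q *ᵥ (fun k => α * (if k = i then (1:ℝ) else 0) + β * (if k = j then 1 else 0))) a = _
  rw [Finset.sum_congr rfl fun a _ => by rw [inner a]]
  rw [ite_dot (fun a => α * Q a i + β * Q a j) i j α β]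

private lemma sq_sum_eval {n : ℕ} (i j : Fin n) (hij : i ≠ j) (α β : ℝ) :
    ∑ a, (α * (if a = i then (1:ℝ) else 0) + β * (if a = j then 1 else 0)) ^ 2
      = α ^ 2 + β ^ 2 := by
  have h : ∀ a, (α * (if a = i then (1:ℝ) else 0) + β * (if a = j then 1 else 0)) ^ 2
      = (α ^ 2) * (if a = i then (1:ℝ) else 0) + (β ^ 2) * (if a = j then 1 else 0) := by
    intro a
    rcases eq_or_ne a i with rfl | hai
    · rw [if_pos rfl, if_neg (by simpa using hij.symm ∘ Eq.symm)]
      ring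
    · rw [if_neg hai]
      split_ifs <;> ring
  rw [Finset.sum_congr rfl fun a _ => h a, Finset.sum_add_distrib,
    ← Finset.mul_sum, ← Finset.mul_sum, Finset.sum_ite_eq', Finset.sum_ite_eq']
  simp

private lemma sq_sum_eval1 {n : ℕ} (i : Fin n) (α : ℝ) :
    ∑ a, (α * (if a = i then (1:ℝ) else 0)) ^ 2 = α ^ 2 := by
  have h : ∀ a, (α * (if a = i then (1:ℝ) else 0)) ^ 2
      = (α ^ 2) * (if a = i then (1:ℝ) else 0) := by
    intro a; split_ifs <;> ring
  rw [Finset.sum_congr rfl fun a _ => h a, ← Finset.mul_sum, Finset.sum_ite_eq']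
  simp

private lemma auxD {n : ℕ} (P : Matrix (Fin n) (Fin n) ℝ) (hsym : P.IsSymm) (ε : ℝ) (hε : 0 < ε)
    (hform : ∀ x : Fin n → ℝ, ε * ∑ i, x i ^ 2 ≤ x ⬝ᵥ P *ᵥ x) :
    P.PosDef ∧ P⁻¹.IsSymm ∧ P⁻¹.PosDef ∧ ∀ i j, |P⁻¹ i j| ≤ 1 / ε := by
  have hHerm : P.IsHermitian := by
    rw [Matrix.IsHermitian, Matrix.conjTranspose_eq_transpose_of_trivial]; exact hsym
  have hPD : P.PosDef := by
    refine Matrix.PosDef.of_dotProduct_mulVec_pos hHerm fun x hx => ?_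
    have hstar : star x = x := by funext i; simp
    rw [hstar]
    obtain ⟨i, hi⟩ := Function.ne_iff.mp hx
    have hsum : 0 < ∑ i, x i ^ 2 :=
      Finset.sum_pos' (fun j _ => sq_nonneg _) ⟨i, Finset.mem_univ i, pow_two_pos_of_ne_zero hi⟩
    calc (0:ℝ) < ε * ∑ i, x i ^ 2 := by positivity
      _ ≤ _ := hform x
  have hdet : IsUnit P.det := hPD.det_pos.ne'.isUnit
  have hinvsym : P⁻¹.IsSymm := by
    rw [Matrix.IsSymm, Matrix.transpose_nonsing_inv, hsym]
  have hinvPD : P⁻¹.PosDef := hPD.inv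
  refine ⟨hPD, hinvsym, hinvPD, ?_⟩
  have hQK : ∀ y : Fin n → ℝ, y ⬝ᵥ P⁻¹ *ᵥ y ≤ (1 / ε) * ∑ i, y i ^ 2 := by
    intro y
    set x := P⁻¹ *ᵥ y with hxdef
    have hPx : P *ᵥ x = y := by
      rw [hxdef, Matrix.mulVec_mulVec, Matrix.mul_nonsing_inv _ hdet, Matrix.one_mulVec]
    have hq1 : y ⬝ᵥ x = x ⬝ᵥ P *ᵥ x := by rw [dotProduct_comm, hPx]
    have h1 : ε * ∑ i, x i ^ 2 ≤ y ⬝ᵥ x := hq1 ▸ hform x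
    have h2 : (y ⬝ᵥ x) ^ 2 ≤ (∑ i, x i ^ 2) * ∑ i, y i ^ 2 := by
      have h := Finset.sum_mul_sq_le_sq_mul_sq Finset.univ x y
      calc (y ⬝ᵥ x)^2 = (∑ i, x i * y i)^2 := by rw [dotProduct_comm]; rfl
        _ ≤ _ := h
    have hy2 : (0:ℝ) ≤ ∑ i, y i ^ 2 := Finset.sum_nonneg fun i _ => sq_nonneg _
    rcases le_or_gt (y ⬝ᵥ x) 0 with h | h
    · calc y ⬝ᵥ x ≤ 0 := h
        _ ≤ (1/ε) * ∑ i, y i ^ 2 := by positivity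
    · have hx2 : 0 ≤ ∑ i, x i ^ 2 := Finset.sum_nonneg fun i _ => sq_nonneg _
      rw [div_mul_eq_mul_div, one_mul, le_div_iff₀ hε]
      nlinarith [h1, h2]
  have hQ0 : ∀ y : Fin n → ℝ, 0 ≤ y ⬝ᵥ P⁻¹ *ᵥ y := by
    intro y
    have h := hinvPD.posSemidef.dotProduct_mulVec_nonneg y
    have hstar : star y = y := by funext i; simp
    rwa [hstar] at h
  have hQsym : ∀ a b, P⁻¹ a b = P⁻¹ b a := by
    intro a b
    conv_lhs => rw [← hinvsym]
    rfl
  -- diagonal bounds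
  have hdiag : ∀ i, 0 ≤ P⁻¹ i i ∧ P⁻¹ i i ≤ 1/ε := by
    intro i
    set y : Fin n → ℝ := fun k => (1:ℝ) * (if k = i then (1:ℝ) else 0) + 0 * (if k = i then 1 else 0) with hy
    have hval : y ⬝ᵥ P⁻¹ *ᵥ y = P⁻¹ i i := by rw [hy, qf_eval]; ring
    have hsq : ∑ a, y a ^ 2 = 1 := by
      rw [hy]
      have h : ∀ a, ((1:ℝ) * (if a = i then (1:ℝ) else 0) + 0 * (if a = i then 1 else 0)) ^ 2
          = (if a = i then (1:ℝ) else 0) := by intro a; split_ifs <;> ring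
      rw [Finset.sum_congr rfl fun a _ => h a, Finset.sum_ite_eq']
      simp
    have h1 := hQK y
    have h2 := hQ0 y
    rw [hval] at h1 h2
    rw [hsq, mul_one] at h1
    exact ⟨h2, h1⟩
  intro i j
  rcases eq_or_ne i j with rfl | hij
  · have h := hdiag i
    rw [abs_le]; constructor <;> linarith [h.1, h.2]
  · have key : ∀ s : ℝ, s = 1 ∨ s = -1 →
        0 ≤ P⁻¹ i i + 2*s*(P⁻¹ i j) + P⁻¹ j j ∧
        P⁻¹ i i + 2*s*(P⁻¹ i j) + P⁻¹ j j ≤ (1/ε)*2 := by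
      intro s hs
      set y : Fin n → ℝ := fun k => (1:ℝ) * (if k = i then (1:ℝ) else 0) + s * (if k = j then 1 else 0) with hy
      have hval : y ⬝ᵥ P⁻¹ *ᵥ y = P⁻¹ i i + 2*s*(P⁻¹ i j) + P⁻¹ j j := by
        rw [hy, qf_eval]
        rw [hQsym j i]
        rcases hs with rfl | rfl <;> ring
      have hsq : ∑ a, y a ^ 2 = 2 := by
        rw [hy, sq_sum_eval i j hij]
        rcases hs with rfl | rfl <;> norm_num
      have h1 := hQK y
      have h2 := hQ0 y
      rw [hval] at h1 h2
      rw [hsq] at h1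
      exact ⟨h2, h1⟩
    have k1 := key 1 (Or.inl rfl)
    have k2 := key (-1) (Or.inr rfl)
    have hdi := hdiag i
    have hdj := hdiag j
    rw [abs_le]
    constructor
    · nlinarith [k2.1, k2.2, hdi.1, hdj.1]
    · nlinarith [k1.1, k1.2, hdi.1, hdj.1]

private lemma sq_div_identity {a b x y : ℝ} (ha : a ≠ 0) (hb : b ≠ 0) :
    (x * b - y * a) ^ 2 / (a * b) = x ^ 2 * b / a + y ^ 2 * a / b - 2 * (x * y) := by
  field_simp
  ring

private lemma auxC {n : ℕ} (r : Fin n → ℝ) (hr : ∀ i, 0 < r i) (hr1 : ∑ i, r i = 1)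
    (d : Fin n → Fin n → ℝ) (hd : ∀ i j, d i j = d j i) (dst : ℝ) (hdst : 0 ≤ dst)
    (hlb : ∀ i j, i ≠ j → dst ≤ d i j)
    (z : Fin n → ℝ) (hz : ∑ i, z i = 0) :
    dst * ∑ i, z i ^ 2 ≤
      (∑ i, z i ^ 2 * (∑ j, d i j * r j) / r i) - ∑ i, ∑ j, d i j * (z i * z j) := by
  set t : Fin n → Fin n → ℝ := fun i j => (z i * r j - z j * r i) ^ 2 / (r i * r j) with ht
  -- rewrite the target as (1/2) ∑∑ d t
  have key : (∑ i, z i ^ 2 * (∑ j, d i j * r j) / r i) - ∑ i, ∑ j, d i j * (z i * z j)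
      = (1/2) * ∑ i, ∑ j, d i j * t i j := by
    have e1 : ∀ i j : Fin n, d i j * t i j
        = d i j * (z i ^ 2 * r j / r i) + d i j * (z j ^ 2 * r i / r j)
          - 2 * (d i j * (z i * z j)) := by
      intro i j
      rw [ht]
      simp only []
      rw [sq_div_identity (hr i).ne' (hr j).ne']
      ring
    have e2 : ∑ i, ∑ j, d i j * t i j
        = (∑ i, ∑ j, d i j * (z i ^ 2 * r j / r i))
          + (∑ i, ∑ j, d i j * (z j ^ 2 * r i / r j))
          - 2 * ∑ i, ∑ j, d i j * (z i * z j) := by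
      rw [Finset.mul_sum, ← Finset.sum_add_distrib, ← Finset.sum_sub_distrib]
      apply Finset.sum_congr rfl
      intro i _
      rw [Finset.mul_sum, ← Finset.sum_add_distrib, ← Finset.sum_sub_distrib]
      exact Finset.sum_congr rfl fun j _ => e1 i j
    have e3 : (∑ i, ∑ j, d i j * (z j ^ 2 * r i / r j))
        = ∑ i, ∑ j, d i j * (z i ^ 2 * r j / r i) := by
      rw [Finset.sum_comm]
      exact Finset.sum_congr rfl fun i _ => Finset.sum_congr rfl fun j _ => by rw [hd j i]
    have e4 : ∑ i, ∑ j, d i j * (z i ^ 2 * r j / r i)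
        = ∑ i, z i ^ 2 * (∑ j, d i j * r j) / r i := by
      apply Finset.sum_congr rfl
      intro i _
      rw [Finset.mul_sum, Finset.sum_div]
      exact Finset.sum_congr rfl fun j _ => by ring
    rw [e2, e3, e4]
    ring
  rw [key]
  -- lower bound the dst-weighted sum of squares
  have step2 : ∑ i, ∑ j, dst * t i j ≤ ∑ i, ∑ j, d i j * t i j := by
    apply Finset.sum_le_sum
    intro i _
    apply Finset.sum_le_sum
    intro j _
    rcases eq_or_ne i j with rfl | hij
    · have : t i i = 0 := by rw [ht]; simp [sub_self]
      rw [this, mul_zero, mul_zero]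
    · have htnn : 0 ≤ t i j := by
        rw [ht]
        have := hr i
        have := hr j
        positivity
      exact mul_le_mul_of_nonneg_right (hlb i j hij) htnn
  -- compute ∑∑ t
  have step3 : ∑ i, ∑ j, t i j = 2 * ∑ i, z i ^ 2 / r i := by
    have e1 : ∀ i j : Fin n, t i j
        = z i ^ 2 / r i * r j + z j ^ 2 / r j * r i - 2 * (z i * z j) := by
      intro i j
      rw [ht]
      simp only []
      rw [sq_div_identity (hr i).ne' (hr j).ne']
      ring
    have e2 : ∑ i, ∑ j, t i j
        = (∑ i, ∑ j, z i ^ 2 / r i * r j) + (∑ i, ∑ j, z j ^ 2 / r j * r i)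
          - 2 * ∑ i, ∑ j, z i * z j := by
      rw [Finset.mul_sum, ← Finset.sum_add_distrib, ← Finset.sum_sub_distrib]
      apply Finset.sum_congr rfl
      intro i _
      rw [Finset.mul_sum, ← Finset.sum_add_distrib, ← Finset.sum_sub_distrib]
      exact Finset.sum_congr rfl fun j _ => e1 i j
    have e3 : ∑ i, ∑ j, z i ^ 2 / r i * r j = ∑ i, z i ^ 2 / r i := by
      apply Finset.sum_congr rfl
      intro i _
      rw [← Finset.mul_sum, hr1, mul_one]
    have e4 : ∑ i, ∑ j, z j ^ 2 / r j * r i = ∑ i, z i ^ 2 / r i := by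
      rw [Finset.sum_comm]
      exact e3
    have e5 : ∑ i, ∑ j, z i * z j = 0 := by
      have : ∀ i : Fin n, ∑ j, z i * z j = 0 := by
        intro i; rw [← Finset.mul_sum, hz, mul_zero]
      rw [Finset.sum_congr rfl fun i _ => this i, Finset.sum_const_zero]
    rw [e2, e3, e4, e5]
    ring
  have step4 : ∑ i, z i ^ 2 ≤ ∑ i, z i ^ 2 / r i := by
    apply Finset.sum_le_sum
    intro i _
    have hri1 : r i ≤ 1 := by
      have h := Finset.single_le_sum (f := r) (fun j _ => (hr j).le) (Finset.mem_univ i)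
      linarith [hr1 ▸ h]
    rw [le_div_iff₀ (hr i)]
    nlinarith [sq_nonneg (z i)]
  calc dst * ∑ i, z i ^ 2 ≤ dst * ∑ i, z i ^ 2 / r i := by
        apply mul_le_mul_of_nonneg_left step4 hdst
    _ = (1/2) * ∑ i, ∑ j, dst * t i j := by
        have : ∑ i, ∑ j, dst * t i j = dst * ∑ i, ∑ j, t i j := by
          rw [Finset.mul_sum]
          exact Finset.sum_congr rfl fun i _ => by rw [Finset.mul_sum]
        rw [this, step3]
        ring
    _ ≤ (1/2) * ∑ i, ∑ j, d i j * t i j := by linarith [step2]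

private lemma mainAux {N : ℕ} (ρ : Fin N → ℝ) (hρpos : ∀ i, 0 < ρ i) (hρs : ∑ i, ρ i < 1)
    (cv : ℝ) (d : Fin (N + 1) → Fin (N + 1) → ℝ) (hd : ∀ i j, d i j = d j i)
    (Amat Gmat : Matrix (Fin N) (Fin N) ℝ)
    (hAd : ∀ i, Amat i i = (∑ k ∈ Finset.univ.erase i,
      (d i.castSucc k.castSucc - d i.castSucc (Fin.last N)) * ρ k) + d i.castSucc (Fin.last N))
    (hAo : ∀ i j, i ≠ j → Amat i j
      = -(d i.castSucc j.castSucc - d i.castSucc (Fin.last N)) * ρ i)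
    (hG : ∀ i j, Gmat i j = cv * (1 / (1 - ∑ k, ρ k) + (if i = j then 1 / ρ i else 0))) :
    ∀ a b, (Gmat * Amat) a b = cv *
      ((if a = b then (∑ j, d a.castSucc j * (Fin.snoc ρ (1 - ∑ i, ρ i) : Fin (N+1) → ℝ) j) / ρ a else 0)
        + (∑ j, d (Fin.last N) j * (Fin.snoc ρ (1 - ∑ i, ρ i) : Fin (N+1) → ℝ) j) / (1 - ∑ i, ρ i)
        - d a.castSucc b.castSucc + d a.castSucc (Fin.last N) + d (Fin.last N) b.castSucc
        - d (Fin.last N) (Fin.last N)) := by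
  set L := Fin.last N with hLdef
  set r : Fin (N + 1) → ℝ := Fin.snoc ρ (1 - ∑ i, ρ i) with hrdef
  have hrc : ∀ k : Fin N, r k.castSucc = ρ k := fun k => Fin.snoc_castSucc _ _ _
  have hrl : r L = 1 - ∑ i, ρ i := Fin.snoc_last _ _
  have hrlpos : 0 < r L := by rw [hrl]; linarith
  set Sf : Fin (N + 1) → ℝ := fun i => ∑ j, d i j * r j with hSfdef
  set sN : ℝ := ∑ k, d k.castSucc L * ρ k with hsNdef
  have hSsplit : ∀ i, Sf i = (∑ k, d i k.castSucc * ρ k) + d i L * r L := by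
    intro i
    rw [hSfdef]
    simp only []
    rw [Fin.sum_univ_castSucc]
    congr 1
    exact Finset.sum_congr rfl fun k _ => by rw [hrc]
  have hSL : Sf L = sN + d L L * r L := by
    rw [hSsplit L, hsNdef]
    congr 1
    exact Finset.sum_congr rfl fun k _ => by rw [hd L k.castSucc]
  have hcol : ∀ b, (∑ k, Amat k b) = d b.castSucc L * r L + sN := by
    intro b
    rw [← Finset.add_sum_erase _ _ (Finset.mem_univ b), hAd b,
      Finset.sum_congr rfl (fun k hk => hAo k b (Finset.ne_of_mem_erase hk))]
    have comb : (∑ k ∈ Finset.univ.erase b, (d b.castSucc k.castSucc - d b.castSucc L) * ρ k)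
        + ∑ k ∈ Finset.univ.erase b, (-(d k.castSucc b.castSucc - d k.castSucc L) * ρ k)
        = ∑ k ∈ Finset.univ.erase b, (d k.castSucc L - d b.castSucc L) * ρ k := by
      rw [← Finset.sum_add_distrib]
      exact Finset.sum_congr rfl fun k _ => by rw [hd b.castSucc k.castSucc]; ring
    have h1 : ∑ k ∈ Finset.univ.erase b, (d k.castSucc L - d b.castSucc L) * ρ k
        = (∑ k, (d k.castSucc L - d b.castSucc L) * ρ k)
          - (d b.castSucc L - d b.castSucc L) * ρ b :=
      Finset.sum_erase_eq_sub (Finset.mem_univ b)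
    have h2 : ∑ k, (d k.castSucc L - d b.castSucc L) * ρ k
        = sN - d b.castSucc L * ∑ k, ρ k := by
      rw [hsNdef, Finset.mul_sum, ← Finset.sum_sub_distrib]
      exact Finset.sum_congr rfl fun k _ => by ring
    have expand : (∑ k ∈ Finset.univ.erase b, (d b.castSucc k.castSucc - d b.castSucc L) * ρ k
        + d b.castSucc L)
        + ∑ k ∈ Finset.univ.erase b, (-(d k.castSucc b.castSucc - d k.castSucc L) * ρ k)
        = (∑ k ∈ Finset.univ.erase b, (d k.castSucc L - d b.castSucc L) * ρ k) + d b.castSucc L := by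
      rw [← comb]; ring
    rw [expand, h1, h2, hrl]
    ring
  have hAdiag : ∀ a, Amat a a
      = Sf a.castSucc + d a.castSucc L * ρ a - d a.castSucc a.castSucc * ρ a := by
    intro a
    rw [hAd a, hSsplit a.castSucc, Finset.sum_erase_eq_sub (Finset.mem_univ a)]
    have h2 : ∑ k, (d a.castSucc k.castSucc - d a.castSucc L) * ρ k
        = (∑ k, d a.castSucc k.castSucc * ρ k) - d a.castSucc L * ∑ k, ρ k := by
      rw [Finset.mul_sum, ← Finset.sum_sub_distrib]
      exact Finset.sum_congr rfl fun k _ => by ring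
    rw [h2, hrl]
    ring
  intro a b
  have hρa : ρ a ≠ 0 := (hρpos a).ne'
  have hrL0 : r L ≠ 0 := hrlpos.ne'
  rw [Matrix.mul_apply]
  have hsplit : ∀ k, Gmat a k * Amat k b
      = cv * (1 / r L) * Amat k b + (if a = k then cv * (1 / ρ a) * Amat k b else 0) := by
    intro k
    rw [hG a k, ← hrl]
    rcases eq_or_ne a k with rfl | h
    · rw [if_pos rfl, if_pos rfl]; ring
    · rw [if_neg h, if_neg h]; ring
  rw [Finset.sum_congr rfl fun k _ => hsplit k, Finset.sum_add_distrib, Finset.sum_ite_eq,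
    if_pos (Finset.mem_univ a), ← Finset.mul_sum, hcol b, ← hrl]
  rw [show (∑ j, d L j * r j) = Sf L from rfl]
  rcases eq_or_ne a b with rfl | hab
  · rw [show (∑ j, d a.castSucc j * r j) = Sf a.castSucc from rfl,
      if_pos rfl, hAdiag a, hSL, hd L a.castSucc]
    field_simp
    ring
  · rw [if_neg hab, hAo a b hab, hSL, hd L b.castSucc]
    field_simp
    ring

private lemma mainAux2 {N : ℕ} (ρ : Fin N → ℝ) (hρpos : ∀ i, 0 < ρ i) (hρs : ∑ i, ρ i < 1)
    (cv cl : ℝ) (hcv : 0 < cv) (hcl : 0 < cl) (hclv : cl ≤ cv)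
    (d : Fin (N + 1) → Fin (N + 1) → ℝ) (hd : ∀ i j, d i j = d j i)
    (dst : ℝ) (hdst : 0 < dst) (hdlb : ∀ i j, i ≠ j → dst ≤ d i j)
    (Amat Gmat : Matrix (Fin N) (Fin N) ℝ)
    (hAd : ∀ i, Amat i i = (∑ k ∈ Finset.univ.erase i,
      (d i.castSucc k.castSucc - d i.castSucc (Fin.last N)) * ρ k) + d i.castSucc (Fin.last N))
    (hAo : ∀ i j, i ≠ j → Amat i j
      = -(d i.castSucc j.castSucc - d i.castSucc (Fin.last N)) * ρ i)
    (hG : ∀ i j, Gmat i j = cv * (1 / (1 - ∑ k, ρ k) + (if i = j then 1 / ρ i else 0))) :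
    (Gmat * Amat).IsSymm ∧
      ∀ x : Fin N → ℝ, (cl * dst) * ∑ i, x i ^ 2 ≤ x ⬝ᵥ (Gmat * Amat) *ᵥ x := by
  have hP := mainAux ρ hρpos hρs cv d hd Amat Gmat hAd hAo hG
  set L := Fin.last N with hLdef
  set r : Fin (N + 1) → ℝ := Fin.snoc ρ (1 - ∑ i, ρ i) with hrdef
  have hrc : ∀ k : Fin N, r k.castSucc = ρ k := fun k => Fin.snoc_castSucc _ _ _
  have hrl : r L = 1 - ∑ i, ρ i := Fin.snoc_last _ _
  have hrpos : ∀ i, 0 < r i := by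
    intro i
    induction i using Fin.lastCases with
    | last => rw [hrl]; linarith
    | cast k => rw [hrc]; exact hρpos k
  have hrsum : ∑ i, r i = 1 := by
    rw [Fin.sum_univ_castSucc, Finset.sum_congr rfl fun k _ => hrc k, hrl]
    ring
  -- fold the (1 - ∑ ρ) in hP into r L
  have hP' : ∀ a b, (Gmat * Amat) a b = cv *
      ((if a = b then (∑ j, d a.castSucc j * r j) / ρ a else 0)
        + (∑ j, d L j * r j) / r L
        - d a.castSucc b.castSucc + d a.castSucc L + d L b.castSucc - d L L) := by
    intro a b
    rw [hP a b, hrl]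
  constructor
  · rw [Matrix.IsSymm]
    ext i j
    rw [Matrix.transpose_apply, hP' j i, hP' i j]
    rcases eq_or_ne i j with rfl | hij
    · rfl
    · rw [if_neg (Ne.symm hij), if_neg hij,
        hd j.castSucc i.castSucc, hd j.castSucc L, hd i.castSucc L]
      ring
  intro x
  set z : Fin (N + 1) → ℝ := Fin.snoc x (-∑ i, x i) with hzdef
  have hzc : ∀ k : Fin N, z k.castSucc = x k := fun k => Fin.snoc_castSucc _ _ _
  have hzl : z L = -∑ i, x i := Fin.snoc_last _ _
  have hzsum : ∑ i, z i = 0 := by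
    rw [Fin.sum_univ_castSucc, Finset.sum_congr rfl fun k _ => hzc k, hzl]
    ring
  -- the quadratic-form identity
  have inner : ∀ a, (∑ b, (Gmat * Amat) a b * x b)
      = cv * ((∑ j, d a.castSucc j * r j) / ρ a * x a
        + (∑ j, d L j * r j) / r L * (∑ i, x i)
        - (∑ b, d a.castSucc b.castSucc * x b)
        + d a.castSucc L * (∑ i, x i)
        + (∑ b, d L b.castSucc * x b)
        - d L L * (∑ i, x i)) := by
    intro a
    have expand : ∀ b, (Gmat * Amat) a b * x b
        = cv * ((if a = b then (∑ j, d a.castSucc j * r j) / ρ a * x b else 0)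
          + (∑ j, d L j * r j) / r L * x b
          - d a.castSucc b.castSucc * x b
          + d a.castSucc L * x b
          + d L b.castSucc * x b
          - d L L * x b) := by
      intro b
      rw [hP' a b]
      split_ifs <;> ring
    rw [Finset.sum_congr rfl fun b _ => expand b, ← Finset.mul_sum]
    congr 1
    rw [Finset.sum_sub_distrib, Finset.sum_add_distrib, Finset.sum_add_distrib,
      Finset.sum_sub_distrib, Finset.sum_add_distrib,
      Finset.sum_ite_eq, if_pos (Finset.mem_univ a)]
    have f2 : ∑ b, (∑ j, d L j * r j) / r L * x b
        = (∑ j, d L j * r j) / r L * ∑ b, x b := by rw [Finset.mul_sum]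
    have f4 : ∑ b, d a.castSucc L * x b = d a.castSucc L * ∑ b, x b := by rw [Finset.mul_sum]
    have f6 : ∑ b, d L L * x b = d L L * ∑ b, x b := by rw [Finset.mul_sum]
    rw [f2, f4, f6]
  have hident : x ⬝ᵥ (Gmat * Amat) *ᵥ x
      = cv * ((∑ i, z i ^ 2 * (∑ j, d i j * r j) / r i) - ∑ i, ∑ j, d i j * (z i * z j)) := by
    have hdot : x ⬝ᵥ (Gmat * Amat) *ᵥ x = ∑ a, x a * ∑ b, (Gmat * Amat) a b * x b := rfl
    rw [hdot, Finset.sum_congr rfl fun a _ => by rw [inner a]]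
    have expand2 : ∀ a : Fin N, x a * (cv * ((∑ j, d a.castSucc j * r j) / ρ a * x a
        + (∑ j, d L j * r j) / r L * (∑ i, x i)
        - (∑ b, d a.castSucc b.castSucc * x b)
        + d a.castSucc L * (∑ i, x i)
        + (∑ b, d L b.castSucc * x b)
        - d L L * (∑ i, x i)))
        = cv * (x a ^ 2 * (∑ j, d a.castSucc j * r j) / ρ a
          + (∑ j, d L j * r j) / r L * (x a * (∑ i, x i))
          - x a * (∑ b, d a.castSucc b.castSucc * x b)
          + d a.castSucc L * x a * (∑ i, x i)
          + (∑ b, d L b.castSucc * x b) * x a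
          - d L L * (x a * (∑ i, x i))) := by
      intro a; ring
    rw [Finset.sum_congr rfl fun a _ => expand2 a, ← Finset.mul_sum]
    congr 1
    rw [Finset.sum_sub_distrib, Finset.sum_add_distrib, Finset.sum_add_distrib,
      Finset.sum_sub_distrib, Finset.sum_add_distrib]
    have g2 : ∑ a, (∑ j, d L j * r j) / r L * (x a * (∑ i, x i))
        = (∑ j, d L j * r j) / r L * ((∑ i, x i) * (∑ i, x i)) := by
      rw [Finset.sum_congr rfl fun a _ =>
        (by ring : (∑ j, d L j * r j) / r L * (x a * (∑ i, x i))
          = ((∑ j, d L j * r j) / r L * (∑ i, x i)) * x a), ← Finset.mul_sum]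
      ring
    have g3 : ∑ a, x a * (∑ b, d a.castSucc b.castSucc * x b)
        = ∑ a, ∑ b, d a.castSucc b.castSucc * (x a * x b) := by
      apply Finset.sum_congr rfl
      intro a _
      rw [Finset.mul_sum]
      exact Finset.sum_congr rfl fun b _ => by ring
    have g4 : ∑ a, d a.castSucc L * x a * (∑ i, x i)
        = (∑ a, d a.castSucc L * x a) * (∑ i, x i) := by rw [Finset.sum_mul]
    have g5 : ∑ a, (∑ b, d L b.castSucc * x b) * x a
        = (∑ b, d L b.castSucc * x b) * (∑ a, x a) := by rw [Finset.mul_sum]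
    have g6 : ∑ a, d L L * (x a * (∑ i, x i))
        = d L L * ((∑ i, x i) * (∑ i, x i)) := by
      rw [Finset.sum_congr rfl fun a _ =>
        (by ring : d L L * (x a * (∑ i, x i)) = (d L L * (∑ i, x i)) * x a), ← Finset.mul_sum]
      ring
    rw [g2, g3, g4, g5, g6]
    -- now expand the z-side
    have E1 : ∑ i, z i ^ 2 * (∑ j, d i j * r j) / r i
        = (∑ a, x a ^ 2 * (∑ j, d a.castSucc j * r j) / ρ a)
          + (∑ i, x i) ^ 2 * (∑ j, d L j * r j) / r L := by
      rw [Fin.sum_univ_castSucc]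
      congr 1
      · exact Finset.sum_congr rfl fun a _ => by rw [hzc, hrc]
      · rw [hzl]; ring
    have F1 : ∀ a : Fin N, ∑ j, d a.castSucc j * (z a.castSucc * z j)
        = (∑ b, d a.castSucc b.castSucc * (x a * x b))
          - d a.castSucc L * x a * (∑ i, x i) := by
      intro a
      rw [Fin.sum_univ_castSucc, hzl,
        Finset.sum_congr rfl fun b _ => by rw [hzc a, hzc b], hzc a]
      ring
    have F2 : ∑ j, d L j * (z L * z j)
        = -((∑ b, d L b.castSucc * x b) * (∑ i, x i)) + d L L * ((∑ i, x i) * (∑ i, x i)) := by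
      rw [Fin.sum_univ_castSucc, hzl]
      have h : ∀ b : Fin N, d L b.castSucc * (-(∑ i, x i) * z b.castSucc)
          = -(d L b.castSucc * x b * (∑ i, x i)) := by
        intro b; rw [hzc b]; ring
      rw [Finset.sum_congr rfl fun b _ => h b, Finset.sum_neg_distrib, ← Finset.sum_mul]
      ring
    have E2 : ∑ i, ∑ j, d i j * (z i * z j)
        = (∑ a, ∑ b, d a.castSucc b.castSucc * (x a * x b))
          - (∑ a, d a.castSucc L * x a) * (∑ i, x i)
          - (∑ b, d L b.castSucc * x b) * (∑ i, x i)
          + d L L * ((∑ i, x i) * (∑ i, x i)) := by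
      rw [Fin.sum_univ_castSucc, Finset.sum_congr rfl fun a _ => F1 a, F2,
        Finset.sum_sub_distrib, ← Finset.sum_mul]
      ring
    rw [E1, E2]
    ring
  -- conclusion via auxC
  have hC := auxC r hrpos hrsum d hd dst hdst.le hdlb z hzsum
  have hz2 : ∑ a, x a ^ 2 ≤ ∑ i, z i ^ 2 := by
    have e : ∑ i, z i ^ 2 = (∑ k : Fin N, x k ^ 2) + z L ^ 2 := by
      rw [Fin.sum_univ_castSucc]
      congr 1
      exact Finset.sum_congr rfl fun k _ => by rw [hzc k]
    rw [e]
    nlinarith [sq_nonneg (z L)]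
  have hx2 : (0:ℝ) ≤ ∑ a, x a ^ 2 := Finset.sum_nonneg fun a _ => sq_nonneg _
  calc (cl * dst) * ∑ i, x i ^ 2 ≤ (cv * dst) * ∑ i, z i ^ 2 := by
        apply mul_le_mul (by nlinarith) hz2 hx2 (by positivity)
    _ = cv * (dst * ∑ i, z i ^ 2) := by ring
    _ ≤ cv * ((∑ i, z i ^ 2 * (∑ j, d i j * r j) / r i) - ∑ i, ∑ j, d i j * (z i * z j)) :=
        mul_le_mul_of_nonneg_left hC hcv.le
    _ = x ⬝ᵥ (Gmat * Amat) *ᵥ x := hident.symm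

/-- The matrix `B(ρ') = A_0(ρ')⁻¹ G(ρ')⁻¹` is symmetric and positive definite on the
open simplex, with entries uniformly bounded by a constant depending only on the molar
masses and the diffusion coefficients. -/
theorem stmt11 (N : ℕ) (hN : 1 ≤ N) (M : Fin (N + 1) → ℝ) (hM : ∀ i, 0 < M i)
    (D : Fin (N + 1) → Fin (N + 1) → ℝ) (hDpos : ∀ i j, i ≠ j → 0 < D i j)
    (hDsymm : ∀ i j, D i j = D j i) :
    let S : Set (Fin N → ℝ) := {ρ | (∀ i, 0 < ρ i ∧ ρ i < 1) ∧ ∑ i, ρ i < 1}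
    let c : (Fin N → ℝ) → ℝ := fun ρ =>
      (∑ i, ρ i / M i.castSucc) + (1 - ∑ i, ρ i) / M (Fin.last N)
    let dcoef : (Fin N → ℝ) → Fin (N + 1) → Fin (N + 1) → ℝ := fun ρ i j =>
      1 / ((c ρ) ^ 2 * M i * M j * D i j)
    let A : (Fin N → ℝ) → Matrix (Fin N) (Fin N) ℝ := fun ρ => Matrix.of fun i j =>
      if i = j then
        (∑ k ∈ Finset.univ.erase i,
          (dcoef ρ i.castSucc k.castSucc - dcoef ρ i.castSucc (Fin.last N)) * ρ k)
          + dcoef ρ i.castSucc (Fin.last N)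
      else -(dcoef ρ i.castSucc j.castSucc - dcoef ρ i.castSucc (Fin.last N)) * ρ i
    let G : (Fin N → ℝ) → Matrix (Fin N) (Fin N) ℝ := fun ρ => Matrix.of fun i j =>
      c ρ * (1 / (1 - ∑ k, ρ k) + (if i = j then 1 / ρ i else 0))
    let B : (Fin N → ℝ) → Matrix (Fin N) (Fin N) ℝ := fun ρ => (A ρ)⁻¹ * (G ρ)⁻¹
    (∀ ρ ∈ S, (B ρ).IsSymm ∧ (B ρ).PosDef) ∧
      ∃ C > 0, ∀ ρ ∈ S, ∀ i j, |B ρ i j| ≤ C := by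
  intro S c dcoef A G B
  -- global constants
  have hne : (Finset.univ : Finset (Fin (N + 1))).Nonempty := Finset.univ_nonempty
  set Mmin := Finset.univ.inf' hne M with hMmindef
  have hMminle : ∀ i, Mmin ≤ M i := fun i => Finset.inf'_le _ (Finset.mem_univ i)
  have hMminpos : 0 < Mmin := by
    rw [hMmindef, Finset.lt_inf'_iff]
    exact fun i _ => hM i
  set Mmax := 1 + ∑ i, M i with hMmaxdef
  have hMsum : (0:ℝ) ≤ ∑ i, M i := Finset.sum_nonneg fun i _ => (hM i).le
  have hMmaxpos : 0 < Mmax := by rw [hMmaxdef]; linarith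
  have hMmaxle : ∀ i, M i ≤ Mmax := by
    intro i
    have h := Finset.single_le_sum (f := M) (fun j _ => (hM j).le) (Finset.mem_univ i)
    rw [hMmaxdef]; linarith
  set Dmax := 1 + ∑ i, ∑ j, |D i j| with hDmaxdef
  have hDsum : (0:ℝ) ≤ ∑ i, ∑ j, |D i j| :=
    Finset.sum_nonneg fun i _ => Finset.sum_nonneg fun j _ => abs_nonneg _
  have hDmaxpos : 0 < Dmax := by rw [hDmaxdef]; linarith
  have hDle : ∀ i j, D i j ≤ Dmax := by
    intro i j
    have h1 : |D i j| ≤ ∑ j', |D i j'| :=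
      Finset.single_le_sum (f := fun j' => |D i j'|) (fun k _ => abs_nonneg _) (Finset.mem_univ j)
    have h2 : ∑ j', |D i j'| ≤ ∑ i', ∑ j', |D i' j'| :=
      Finset.single_le_sum (f := fun i' => ∑ j', |D i' j'|)
        (fun k _ => Finset.sum_nonneg fun _ _ => abs_nonneg _) (Finset.mem_univ i)
    have h0 := le_abs_self (D i j)
    rw [hDmaxdef]; linarith
  set dst := Mmin ^ 2 / (Mmax ^ 2 * Dmax) with hdstdef
  have hdstpos : 0 < dst := by rw [hdstdef]; positivity
  -- the per-point result
  have main : ∀ ρ ∈ S, (G ρ * A ρ).IsSymm ∧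
      ∀ x : Fin N → ℝ, ((1 / Mmax) * dst) * ∑ i, x i ^ 2 ≤ x ⬝ᵥ (G ρ * A ρ) *ᵥ x := by
    intro ρ hρ
    obtain ⟨h01, hsum⟩ := hρ
    have hρpos : ∀ i, 0 < ρ i := fun i => (h01 i).1
    -- bounds on c ρ
    have hcl' : 1 / Mmax ≤ c ρ := by
      have e : 1 / Mmax = (∑ i, ρ i / Mmax) + (1 - ∑ i, ρ i) / Mmax := by
        rw [← Finset.sum_div, ← add_div,
          show (∑ i, ρ i) + (1 - ∑ i, ρ i) = 1 from by ring]
      rw [e]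
      have hterm : ∀ i : Fin N, ρ i / Mmax ≤ ρ i / M i.castSucc := fun i =>
        div_le_div_of_nonneg_left (hρpos i).le (hM i.castSucc) (hMmaxle i.castSucc)
      have hlast : (1 - ∑ i, ρ i) / Mmax ≤ (1 - ∑ i, ρ i) / M (Fin.last N) :=
        div_le_div_of_nonneg_left (by linarith) (hM (Fin.last N)) (hMmaxle (Fin.last N))
      have hsump : ∑ i, ρ i / Mmax ≤ ∑ i, ρ i / M i.castSucc :=
        Finset.sum_le_sum fun i _ => hterm i
      show _ ≤ (∑ i, ρ i / M i.castSucc) + (1 - ∑ i, ρ i) / M (Fin.last N)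
      linarith
    have hcu : c ρ ≤ 1 / Mmin := by
      have e : 1 / Mmin = (∑ i, ρ i / Mmin) + (1 - ∑ i, ρ i) / Mmin := by
        rw [← Finset.sum_div, ← add_div,
          show (∑ i, ρ i) + (1 - ∑ i, ρ i) = 1 from by ring]
      rw [e]
      have hterm : ∀ i : Fin N, ρ i / M i.castSucc ≤ ρ i / Mmin := fun i =>
        div_le_div_of_nonneg_left (hρpos i).le hMminpos (hMminle i.castSucc)
      have hlast : (1 - ∑ i, ρ i) / M (Fin.last N) ≤ (1 - ∑ i, ρ i) / Mmin :=
        div_le_div_of_nonneg_left (by linarith) hMminpos (hMminle (Fin.last N))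
      have hsump : ∑ i, ρ i / M i.castSucc ≤ ∑ i, ρ i / Mmin :=
        Finset.sum_le_sum fun i _ => hterm i
      show (∑ i, ρ i / M i.castSucc) + (1 - ∑ i, ρ i) / M (Fin.last N) ≤ _
      linarith
    have hcpos : 0 < c ρ := lt_of_lt_of_le (by positivity) hcl'
    -- properties of dcoef ρ
    have hdsym : ∀ i j, dcoef ρ i j = dcoef ρ j i := by
      intro i j
      show 1 / ((c ρ) ^ 2 * M i * M j * D i j) = 1 / ((c ρ) ^ 2 * M j * M i * D j i)
      rw [hDsymm i j, mul_right_comm ((c ρ) ^ 2) (M i) (M j)]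
    have hdlb : ∀ i j, i ≠ j → dst ≤ dcoef ρ i j := by
      intro i j hij
      show dst ≤ 1 / ((c ρ) ^ 2 * M i * M j * D i j)
      have hDij := hDpos i j hij
      have hq : 0 < (c ρ) ^ 2 * M i * M j * D i j :=
        mul_pos (mul_pos (mul_pos (pow_pos hcpos 2) (hM i)) (hM j)) hDij
      rw [le_div_iff₀ hq]
      have hcsq : (c ρ) ^ 2 ≤ (1 / Mmin) ^ 2 := pow_le_pow_left₀ hcpos.le hcu 2
      have b1 : (c ρ) ^ 2 * M i ≤ (1 / Mmin) ^ 2 * Mmax :=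
        mul_le_mul hcsq (hMmaxle i) (hM i).le (by positivity)
      have b2 : (c ρ) ^ 2 * M i * M j ≤ (1 / Mmin) ^ 2 * Mmax * Mmax :=
        mul_le_mul b1 (hMmaxle j) (hM j).le (by positivity)
      have hqle : (c ρ) ^ 2 * M i * M j * D i j ≤ (1 / Mmin) ^ 2 * Mmax * Mmax * Dmax :=
        mul_le_mul b2 (hDle i j) hDij.le (by positivity)
      have hMmin0 : Mmin ≠ 0 := hMminpos.ne'
      have hMmax0 : Mmax ≠ 0 := hMmaxpos.ne'
      have hDmax0 : Dmax ≠ 0 := hDmaxpos.ne'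
      have hfin : dst * ((1 / Mmin) ^ 2 * Mmax * Mmax * Dmax) = 1 := by
        rw [hdstdef]
        field_simp
      calc dst * ((c ρ) ^ 2 * M i * M j * D i j)
          ≤ dst * ((1 / Mmin) ^ 2 * Mmax * Mmax * Dmax) :=
            mul_le_mul_of_nonneg_left hqle hdstpos.le
        _ = 1 := hfin
    -- matrix entries
    have hAd : ∀ i : Fin N, A ρ i i = (∑ k ∈ Finset.univ.erase i,
        (dcoef ρ i.castSucc k.castSucc - dcoef ρ i.castSucc (Fin.last N)) * ρ k)
        + dcoef ρ i.castSucc (Fin.last N) := by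
      intro i
      simp only [A, Matrix.of_apply, eq_self_iff_true, if_true]
    have hAo : ∀ i j, i ≠ j → A ρ i j
        = -(dcoef ρ i.castSucc j.castSucc - dcoef ρ i.castSucc (Fin.last N)) * ρ i := by
      intro i j hij
      simp only [A, Matrix.of_apply]
      rw [if_neg hij]
    have hG' : ∀ i j, G ρ i j = c ρ * (1 / (1 - ∑ k, ρ k) + (if i = j then 1 / ρ i else 0)) := by
      intro i j
      simp only [G, Matrix.of_apply]
    exact mainAux2 ρ hρpos hsum (c ρ) (1 / Mmax) hcpos (by positivity) hcl' (dcoef ρ) hdsym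
      dst hdstpos hdlb (A ρ) (G ρ) hAd hAo hG'
  -- assemble
  have hε : 0 < (1 / Mmax) * dst := by positivity
  have hBeq : ∀ ρ : Fin N → ℝ, B ρ = (G ρ * A ρ)⁻¹ := by
    intro ρ
    simp only [B]
    rw [Matrix.mul_inv_rev]
  constructor
  · intro ρ hρ
    obtain ⟨hsym, hform⟩ := main ρ hρ
    obtain ⟨_, h1, h2, _⟩ := auxD _ hsym _ hε hform
    rw [hBeq ρ]
    exact ⟨h1, h2⟩
  · refine ⟨1 / ((1 / Mmax) * dst), one_div_pos.mpr hε, ?_⟩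
    intro ρ hρ i j
    obtain ⟨hsym, hform⟩ := main ρ hρ
    obtain ⟨_, _, _, h4⟩ := auxD _ hsym _ hε hform
    rw [hBeq ρ]
    exact h4 i j
end
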